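/- arXiv:2511.21170 — 7 statements merged into one kernel-verified Lean document; each statement's English description precedes it below -/
import Mathlib

section
/- If G is a graph of order n with no isolated vertices and G is not the complete graph K_n, then SEC(G) ≥ δ(G) + 2, where δ(G) is the minimum degree of G. -/
namespace SecCoal

/-- `D` is a dominating set of `G`. -/
def IsDominating {V : Type*} (G : SimpleGraph V) (D : Set V) : Prop :=
  ∀ v ∉ D, ∃ u ∈ D, G.Adj u v

/-- `S` is a secure dominating set of `G`. -/
def IsSecureDominating {V : Type*} (G : SimpleGraph V) (S : Set V) : Prop :=
  IsDominating G S ∧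
    ∀ u ∉ S, ∃ v ∈ S, G.Adj v u ∧ IsDominating G ((S \ {v}) ∪ {u})

/-- Degree of a vertex. -/
noncomputable def deg {V : Type*} (G : SimpleGraph V) (v : V) : ℕ :=
  (G.neighborSet v).ncard

/-- Minimum degree. -/
noncomputable def minDeg {V : Type*} (G : SimpleGraph V) : ℕ :=
  sInf (Set.range (deg G))

/-- Maximum degree. -/
noncomputable def maxDeg {V : Type*} (G : SimpleGraph V) : ℕ :=
  sSup (Set.range (deg G))

/-- `π` is a secure coalition partition of `G`. -/
def IsSecPartition {V : Type*} (G : SimpleGraph V) (π : Finset (Set V)) : Prop :=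
  Setoid.IsPartition (↑π : Set (Set V)) ∧
    ∀ A ∈ π,
      (∃ v, A = {v} ∧ deg G v = Nat.card V - 1 ∧ IsSecureDominating G A) ∨
      (¬ IsSecureDominating G A ∧
        ∃ B ∈ π, B ≠ A ∧ IsSecureDominating G (A ∪ B))

/-- The secure coalition number of `G`. -/
noncomputable def SEC {V : Type*} (G : SimpleGraph V) : ℕ :=
  sSup {k | ∃ π : Finset (Set V), IsSecPartition G π ∧ π.card = k}

/-- Two disjoint sets form a secure coalition. -/
def FormsSecCoalition {V : Type*} (G : SimpleGraph V) (A B : Set V) : Prop :=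
  Disjoint A B ∧ ¬ IsSecureDominating G A ∧ ¬ IsSecureDominating G B ∧
    IsSecureDominating G (A ∪ B)

/-- The domination number of `G`. -/
noncomputable def gammaDom {V : Type*} (G : SimpleGraph V) : ℕ :=
  sInf {k | ∃ D : Set V, IsDominating G D ∧ D.ncard = k}

/-- The secure domination number of `G`. -/
noncomputable def secDomNum {V : Type*} (G : SimpleGraph V) : ℕ :=
  sInf {k | ∃ S : Set V, IsSecureDominating G S ∧ S.ncard = k}

/-- `π` is a coalition partition (w.r.t. domination) of `G`. -/
def IsCoalitionPartition {V : Type*} (G : SimpleGraph V) (π : Finset (Set V)) : Prop :=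
  Setoid.IsPartition (↑π : Set (Set V)) ∧
    ∀ A ∈ π,
      (∃ v, A = {v} ∧ IsDominating G A) ∨
      (¬ IsDominating G A ∧ ∃ B ∈ π, B ≠ A ∧ IsDominating G (A ∪ B))

/-- The coalition number of `G`. -/
noncomputable def CNum {V : Type*} (G : SimpleGraph V) : ℕ :=
  sSup {k | ∃ π : Finset (Set V), IsCoalitionPartition G π ∧ π.card = k}

/-- The secure coalition graph of `G` w.r.t. a partition `π`. -/
def SCG {V : Type*} (G : SimpleGraph V) (π : Finset (Set V)) :
    SimpleGraph {A : Set V // A ∈ π} where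
  Adj A B := FormsSecCoalition G A.1 B.1
  symm := by
    constructor
    rintro A B ⟨hd, h1, h2, h3⟩
    exact ⟨hd.symm, h2, h1, by rwa [Set.union_comm]⟩
  loopless := by
    constructor
    rintro A ⟨hd, h1, h2, h3⟩
    exact h1 (by simpa using h3)

end SecCoal

open SecCoal
open SecCoal Set

section Aux

variable {V : Type*} [Fintype V] (G : SimpleGraph V)

private lemma deg_min (y : V) : minDeg G ≤ deg G y := Nat.sInf_le ⟨y, rfl⟩

private lemma deg_eq (y : V) : deg G y = (G.neighborSet y).ncard := rfl

private lemma Nc_card (v : V) :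
    (insert v (G.neighborSet v)).ncard = deg G v + 1 :=
  Set.ncard_insert_of_notMem (by simp) (Set.toFinite _)

private lemma not_mem_insert_elim {α : Type*} {a u : α} {s : Set α}
    (h : a ∉ insert u s) : a ≠ u ∧ a ∉ s :=
  ⟨fun he => h (he ▸ Set.mem_insert _ _), fun hs => h (Set.mem_insert_of_mem _ hs)⟩

private lemma dom_insert (v : V) (hv : deg G v = minDeg G) (u : V)
    (hu : u ∈ insert v (G.neighborSet v)) :
    IsDominating G (insert u (insert v (G.neighborSet v))ᶜ) := by
  intro y hy
  obtain ⟨hyu, hyR⟩ := not_mem_insert_elim hy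
  have hyNc : y ∈ insert v (G.neighborSet v) := Set.not_notMem.mp hyR
  rcases Set.mem_insert_iff.mp hyNc with hyv | hyN
  · subst hyv
    have huv : u ∈ G.neighborSet y := by
      rcases Set.mem_insert_iff.mp hu with h | h
      · exact absurd h.symm hyu
      · exact h
    exact ⟨u, Set.mem_insert _ _, (G.mem_neighborSet y u |>.mp huv).symm⟩
  · by_contra hcon
    push_neg at hcon
    have hne_uy : u ≠ y := fun h => hyu h.symm
    have hsub : G.neighborSet y ⊆ (insert v (G.neighborSet v)) \ {u, y} := by
      intro t ht
      have hadj : G.Adj y t := ht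
      have htS : t ∉ insert u (insert v (G.neighborSet v))ᶜ := fun hm => hcon t hm hadj.symm
      obtain ⟨htu, htR⟩ := not_mem_insert_elim htS
      refine ⟨Set.not_notMem.mp htR, ?_⟩
      simp only [Set.mem_insert_iff, Set.mem_singleton_iff, not_or]
      exact ⟨htu, fun h => G.irrefl (h ▸ hadj)⟩
    have hsubNc : ({u, y} : Set V) ⊆ insert v (G.neighborSet v) := by
      intro t ht
      rcases ht with rfl | ht
      · exact hu
      · exact Set.mem_insert_of_mem _ (Set.mem_singleton_iff.mp ht ▸ hyN)
    have hc1 : ((insert v (G.neighborSet v)) \ {u, y}).ncard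
        = (insert v (G.neighborSet v)).ncard - ({u, y} : Set V).ncard :=
      Set.ncard_diff hsubNc
    have hpair : ({u, y} : Set V).ncard = 2 := Set.ncard_pair hne_uy
    have hNc := Nc_card G v
    have hle := Set.ncard_le_ncard hsub (Set.toFinite _)
    have h1 : 1 ≤ minDeg G := by
      rw [← hv, deg_eq]
      exact (Set.ncard_pos (Set.toFinite _)).mpr ⟨y, hyN⟩
    have hdy := deg_min G y
    rw [deg_eq] at hdy
    omega

private lemma sec_insert (v : V) (hv : deg G v = minDeg G) (u : V)
    (hu : u ∈ insert v (G.neighborSet v)) :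
    IsSecureDominating G (insert u (insert v (G.neighborSet v))ᶜ) := by
  refine ⟨dom_insert G v hv u hu, ?_⟩
  intro w hw
  obtain ⟨hwu, hwR⟩ := not_mem_insert_elim hw
  have hwNc : w ∈ insert v (G.neighborSet v) := Set.not_notMem.mp hwR
  rcases Set.mem_insert_iff.mp hwNc with hwv | hwN
  · -- w = v; swap with u
    subst hwv
    have huv : u ∈ G.neighborSet w := by
      rcases Set.mem_insert_iff.mp hu with h | h
      · exact absurd h.symm hwu
      · exact h
    refine ⟨u, Set.mem_insert _ _, (G.mem_neighborSet w u |>.mp huv).symm, ?_⟩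
    intro y hy
    have hyv : y ≠ w := fun h => hy (Or.inr h)
    have hyNc : y ∈ insert w (G.neighborSet w) := by
      by_contra h
      have h1 : y ∈ insert u (insert w (G.neighborSet w))ᶜ :=
        Set.mem_insert_of_mem _ h
      have h2 : y ≠ u := by
        rintro rfl
        exact h hu
      exact hy (Or.inl ⟨h1, h2⟩)
    have hyN : y ∈ G.neighborSet w := by
      rcases Set.mem_insert_iff.mp hyNc with h | h
      · exact absurd h hyv
      · exact h
    exact ⟨w, Or.inr rfl, G.mem_neighborSet w y |>.mp hyN⟩
  · -- w ∈ N(v); pick a neighbor z of w in S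
    obtain ⟨z, hzS, hzw⟩ := dom_insert G v hv u hu w (by
      intro h
      rcases Set.mem_insert_iff.mp h with h | h
      · exact hwu h
      · exact h hwNc)
    refine ⟨z, hzS, hzw, ?_⟩
    intro y hy
    by_contra hcon
    push_neg at hcon
    have hwS' : w ∈ (insert u (insert v (G.neighborSet v))ᶜ \ {z}) ∪ {w} := Or.inr rfl
    have hyw : y ≠ w := fun h => hy (h ▸ hwS')
    rcases eq_or_ne y v with rfl | hyv
    · exact hcon w hwS' ((G.mem_neighborSet y w |>.mp hwN).symm)
    rcases eq_or_ne y z with rfl | hyz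
    · exact hcon w hwS' hzw.symm
    · -- y ∈ N(v) \ {u, w, v, z}
      have hyS : y ∉ insert u (insert v (G.neighborSet v))ᶜ := fun h =>
        hy (Or.inl ⟨h, hyz⟩)
      obtain ⟨hyu, hyR⟩ := not_mem_insert_elim hyS
      have hyNc : y ∈ insert v (G.neighborSet v) := Set.not_notMem.mp hyR
      have hyN : y ∈ G.neighborSet v := by
        rcases Set.mem_insert_iff.mp hyNc with h | h
        · exact absurd h hyv
        · exact h
      -- neighbors of y are confined to a small set
      have hsub : G.neighborSet y ⊆
          ((insert v (G.neighborSet v)) \ {u, w, y}) ∪ {z} := by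
        intro t ht
        have hadj : G.Adj y t := ht
        rcases eq_or_ne t z with rfl | htz
        · exact Or.inr rfl
        have htS' : t ∉ (insert u (insert v (G.neighborSet v))ᶜ \ {z}) ∪ {w} :=
          fun hm => hcon t hm hadj.symm
        simp only [Set.mem_union, Set.mem_diff, Set.mem_singleton_iff, not_or,
          not_and, not_not] at htS'
        obtain ⟨ht1, ht2⟩ := htS'
        have htS : t ∉ insert u (insert v (G.neighborSet v))ᶜ := fun h =>
          htz (ht1 h)
        obtain ⟨htu, htR⟩ := not_mem_insert_elim htS
        refine Or.inl ⟨Set.not_notMem.mp htR, ?_⟩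
        simp only [Set.mem_insert_iff, Set.mem_singleton_iff, not_or]
        exact ⟨htu, ht2, fun h => G.irrefl (h ▸ hadj)⟩
      have huw : u ≠ w := fun h => hwu h.symm
      have huy : u ≠ y := fun h => hyu h.symm
      have htriple : ({u, w, y} : Set V).ncard = 3 :=
        Set.ncard_eq_three.mpr ⟨u, w, y, huw, huy, hyw.symm, rfl⟩
      have hsubNc : ({u, w, y} : Set V) ⊆ insert v (G.neighborSet v) := by
        intro t ht
        rcases ht with rfl | rfl | ht
        · exact hu
        · exact Set.mem_insert_of_mem _ hwN
        · exact Set.mem_insert_of_mem _ (Set.mem_singleton_iff.mp ht ▸ hyN)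
      have hc1 : ((insert v (G.neighborSet v)) \ {u, w, y}).ncard
          = (insert v (G.neighborSet v)).ncard - ({u, w, y} : Set V).ncard :=
        Set.ncard_diff hsubNc
      have hc2 : (((insert v (G.neighborSet v)) \ {u, w, y}) ∪ {z}).ncard
          ≤ ((insert v (G.neighborSet v)) \ {u, w, y}).ncard + 1 := by
        rw [Set.union_singleton]
        exact Set.ncard_insert_le _ _
      have hNc := Nc_card G v
      have hle := Set.ncard_le_ncard hsub (Set.toFinite _)
      have h2 : 2 ≤ minDeg G := by
        rw [← hv, deg_eq]
        have : ({w, y} : Set V) ⊆ G.neighborSet v := by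
          intro t ht
          rcases ht with rfl | ht
          · exact hwN
          · exact Set.mem_singleton_iff.mp ht ▸ hyN
        have := Set.ncard_le_ncard this (Set.toFinite _)
        rwa [Set.ncard_pair hyw.symm] at this
      have hdy := deg_min G y
      rw [deg_eq] at hdy
      omega

private lemma not_top_exists_nonadj (hne : G ≠ ⊤) : ∃ b c, b ≠ c ∧ ¬ G.Adj b c := by
  by_contra h
  push_neg at h
  apply hne
  ext x y
  simp only [SimpleGraph.top_adj]
  exact ⟨fun ha => ha.ne, fun hxy => h x y hxy⟩

private lemma not_sec_singleton (hne : G ≠ ⊤) (a : V) :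
    ¬ IsSecureDominating G {a} := by
  rintro ⟨hdom, hsec⟩
  obtain ⟨b, c, hbc, hnadj⟩ := not_top_exists_nonadj G hne
  have univ_a : ∀ x, x ≠ a → G.Adj a x := by
    intro x hx
    obtain ⟨z, hz, hadj⟩ := hdom x (by simpa using hx)
    rwa [Set.mem_singleton_iff.mp hz] at hadj
  have hba : b ≠ a := by
    rintro rfl
    exact hnadj (univ_a c hbc.symm)
  have hca : c ≠ a := by
    rintro rfl
    exact hnadj ((univ_a b hbc).symm)
  obtain ⟨z, hz, _, hdom'⟩ := hsec b (by simpa using hba)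
  have hz' : z = a := Set.mem_singleton_iff.mp hz
  rw [hz'] at hdom'
  have hcb : c ∉ (({a} : Set V) \ {a}) ∪ {b} := by
    simp [hbc.symm]
  obtain ⟨t, ht, hadj⟩ := hdom' c hcb
  simp only [Set.mem_union, Set.mem_diff, Set.mem_singleton_iff] at ht
  rcases ht with ⟨h1, h2⟩ | rfl
  · exact h2 h1
  · exact hnadj hadj

private lemma R_nonempty (hne : G ≠ ⊤) (v : V) (hv : deg G v = minDeg G) :
    ((insert v (G.neighborSet v))ᶜ : Set V).Nonempty := by
  rw [Set.nonempty_compl]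
  intro hNc
  apply hne
  have huniv : insert v (G.neighborSet v) = Set.univ := by
    rw [← Set.top_eq_univ] at hNc ⊢
    exact hNc
  have hNv : G.neighborSet v = {v}ᶜ := by
    ext x
    simp only [Set.mem_compl_iff, Set.mem_singleton_iff]
    constructor
    · intro hx
      rintro rfl
      exact G.irrefl hx
    · intro hx
      have : x ∈ insert v (G.neighborSet v) := huniv ▸ Set.mem_univ x
      rcases Set.mem_insert_iff.mp this with h | h
      · exact absurd h hx
      · exact h
  have hcompl : ∀ x : V, (({x} : Set V)ᶜ).ncard = Nat.card V - 1 := by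
    intro x
    have h := Set.ncard_add_ncard_compl ({x} : Set V)
    rw [Set.ncard_singleton] at h
    omega
  have hall : ∀ x : V, G.neighborSet x = {x}ᶜ := by
    intro x
    refine Set.eq_of_subset_of_ncard_le ?_ ?_ (Set.toFinite _)
    · intro t ht
      simp only [Set.mem_compl_iff, Set.mem_singleton_iff]
      rintro rfl
      exact G.irrefl ht
    · have h1 := deg_min G x
      rw [← hv, deg_eq, deg_eq, hNv, hcompl v] at h1
      have h2 := hcompl x
      omega
  ext x y
  simp only [SimpleGraph.top_adj]
  constructor
  · exact fun h => h.ne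
  · intro hxy
    have : y ∈ G.neighborSet x := by
      rw [hall x]
      simpa using (Ne.symm hxy)
    exact this

private lemma R_not_sec (v : V) :
    ¬ IsSecureDominating G ((insert v (G.neighborSet v))ᶜ : Set V) := by
  rintro ⟨hdom, -⟩
  obtain ⟨z, hz, hadj⟩ := hdom v (by simp)
  exact hz (Set.mem_insert_of_mem _ hadj.symm)

end Aux

theorem stmt0 {V : Type*} [Fintype V] (G : SimpleGraph V)
    (hiso : ∀ v : V, ∃ u, G.Adj u v) (hne : G ≠ ⊤) :
    minDeg G + 2 ≤ SEC G := by
  classical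
  have hVne : Nonempty V := by
    by_contra h
    rw [not_nonempty_iff] at h
    apply hne
    ext x y
    exact isEmptyElim x
  obtain ⟨v, hv⟩ : ∃ v, deg G v = minDeg G := Nat.sInf_mem (Set.range_nonempty (deg G))
  set Nc : Set V := insert v (G.neighborSet v) with hNcdef
  set R : Set V := Ncᶜ with hRdef
  have hRne : R.Nonempty := R_nonempty G hne v hv
  have hNcfin : Nc.Finite := Set.toFinite _
  set π : Finset (Set V) := insert R (hNcfin.toFinset.image fun u => ({u} : Set V)) with hπdef
  have hmem_im : ∀ A, A ∈ hNcfin.toFinset.image (fun u => ({u} : Set V)) ↔ ∃ u ∈ Nc, A = {u} := by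
    intro A
    simp only [Finset.mem_image, Set.Finite.mem_toFinset]
    constructor
    · rintro ⟨a, ha, rfl⟩
      exact ⟨a, ha, rfl⟩
    · rintro ⟨a, ha, rfl⟩
      exact ⟨a, ha, rfl⟩
  have hRnotim : R ∉ hNcfin.toFinset.image (fun u => ({u} : Set V)) := by
    rw [hmem_im]
    rintro ⟨u, huNc, hR⟩
    have hu : u ∈ R := hR ▸ rfl
    exact hu huNc
  have hcard : π.card = minDeg G + 2 := by
    rw [hπdef, Finset.card_insert_of_notMem hRnotim,
      Finset.card_image_of_injective _ Set.singleton_injective]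
    have h1 : hNcfin.toFinset.card = Nc.ncard := (Set.ncard_eq_toFinset_card _ hNcfin).symm
    rw [h1, Nc_card G v, hv]
  have hAmem : ∀ A, A ∈ π ↔ A = R ∨ ∃ u ∈ Nc, A = {u} := by
    intro A
    rw [hπdef, Finset.mem_insert, hmem_im]
  have hpart : Setoid.IsPartition (↑π : Set (Set V)) := by
    constructor
    · intro h0
      rcases (hAmem ∅).mp h0 with h | ⟨u, _, h⟩
      · exact hRne.ne_empty h.symm
      · exact (Set.singleton_ne_empty u) h.symm
    · intro a
      by_cases ha : a ∈ Nc
      · refine ⟨{a}, ⟨(hAmem _).mpr (Or.inr ⟨a, ha, rfl⟩), rfl⟩, ?_⟩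
        rintro B ⟨hB, haB⟩
        rcases (hAmem B).mp hB with rfl | ⟨u, huNc, rfl⟩
        · exact absurd ha haB
        · rw [Set.mem_singleton_iff.mp haB]
      · refine ⟨R, ⟨(hAmem _).mpr (Or.inl rfl), ha⟩, ?_⟩
        rintro B ⟨hB, haB⟩
        rcases (hAmem B).mp hB with rfl | ⟨u, huNc, rfl⟩
        · rfl
        · exact absurd (Set.mem_singleton_iff.mp haB ▸ huNc) ha
  have hsecpart : IsSecPartition G π := by
    refine ⟨hpart, ?_⟩
    intro A hA
    right
    rcases (hAmem A).mp hA with rfl | ⟨u, huNc, rfl⟩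
    · refine ⟨R_not_sec G v, {v}, (hAmem _).mpr (Or.inr ⟨v, Set.mem_insert _ _, rfl⟩), ?_, ?_⟩
      · intro h
        have hvR : v ∈ R := h ▸ rfl
        exact hvR (Set.mem_insert _ _)
      · rw [Set.union_singleton]
        exact sec_insert G v hv v (Set.mem_insert _ _)
    · refine ⟨not_sec_singleton G hne u, R, (hAmem _).mpr (Or.inl rfl), ?_, ?_⟩
      · intro h
        have huR : u ∈ R := h ▸ rfl
        exact huR huNc
      · rw [Set.singleton_union]
        exact sec_insert G v hv u huNc
  have hbdd : BddAbove {k | ∃ π : Finset (Set V), IsSecPartition G π ∧ π.card = k} := by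
    refine ⟨Fintype.card (Set V), ?_⟩
    rintro k ⟨π', _, rfl⟩
    exact Finset.card_le_univ π'
  have hmem : minDeg G + 2 ∈ {k | ∃ π : Finset (Set V), IsSecPartition G π ∧ π.card = k} :=
    ⟨π, hsecpart, hcard⟩
  exact le_csSup hbdd hmem
end

section
/- Every finite simple graph G admits a secure coalition partition. -/
section Aux
open SecCoal

variable {V : Type*}

lemma secCoal_univ_sd (G : SimpleGraph V) : IsSecureDominating G Set.univ :=
  ⟨fun v hv => absurd (Set.mem_univ v) hv, fun u hu => absurd (Set.mem_univ u) hu⟩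

lemma secCoal_part_eq {π : Finset (Set V)} (h : Setoid.IsPartition (↑π : Set (Set V)))
    {A B : Set V} (hA : A ∈ π) (hB : B ∈ π) {a : V} (haA : a ∈ A) (haB : a ∈ B) : A = B := by
  obtain ⟨C, -, huniq⟩ := h.2 a
  rw [huniq A ⟨hA, haA⟩, huniq B ⟨hB, haB⟩]

lemma secCoal_part_nonempty {π : Finset (Set V)} (h : Setoid.IsPartition (↑π : Set (Set V)))
    {A : Set V} (hA : A ∈ π) : A.Nonempty := by
  rcases Set.eq_empty_or_nonempty A with rfl | hne
  · exact absurd (Finset.mem_coe.mpr hA) h.1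
  · exact hne

lemma secCoal_merge [DecidableEq (Set V)] {π : Finset (Set V)}
    (h : Setoid.IsPartition (↑π : Set (Set V)))
    {A B : Set V} (hA : A ∈ π) (hB : B ∈ π) (hAB : A ≠ B) :
    Setoid.IsPartition (↑(insert (A ∪ B) ((π.erase A).erase B)) : Set (Set V)) ∧
      (insert (A ∪ B) ((π.erase A).erase B)).card = π.card - 1 := by
  have hAne : A.Nonempty := secCoal_part_nonempty h hA
  obtain ⟨a0, ha0⟩ := hAne
  have hnotmem : A ∪ B ∉ (π.erase A).erase B := by
    intro hmem
    rw [Finset.mem_erase, Finset.mem_erase] at hmem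
    exact hmem.2.1 (secCoal_part_eq h hmem.2.2 hA (Or.inl ha0) ha0)
  constructor
  · constructor
    · intro hmem
      simp only [Finset.coe_insert, Set.mem_insert_iff, Finset.mem_coe,
        Finset.mem_erase] at hmem
      rcases hmem with heq | ⟨-, -, hmem⟩
      · exact absurd heq.symm (Set.Nonempty.ne_empty ⟨a0, Or.inl ha0⟩)
      · exact h.1 (Finset.mem_coe.mpr hmem)
    · intro a
      obtain ⟨C, ⟨hCπ, haC⟩, huniq⟩ := h.2 a
      have hCπ' : C ∈ π := Finset.mem_coe.mp hCπ
      by_cases hC : C = A ∨ C = B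
      · refine ⟨A ∪ B, ⟨by simp, ?_⟩, ?_⟩
        · rcases hC with rfl | rfl
          · exact Or.inl haC
          · exact Or.inr haC
        · rintro b ⟨hb, hab⟩
          simp only [Finset.coe_insert, Set.mem_insert_iff, Finset.mem_coe,
            Finset.mem_erase] at hb
          rcases hb with rfl | ⟨hbB, hbA, hbπ⟩
          · rfl
          · have := huniq b ⟨Finset.mem_coe.mpr hbπ, hab⟩
            rcases hC with rfl | rfl
            · exact absurd this hbA
            · exact absurd this hbB
      · push_neg at hC
        refine ⟨C, ⟨?_, haC⟩, ?_⟩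
        · simp only [Finset.coe_insert, Set.mem_insert_iff, Finset.mem_coe,
            Finset.mem_erase]
          exact Or.inr ⟨hC.2, hC.1, hCπ'⟩
        · rintro b ⟨hb, hab⟩
          simp only [Finset.coe_insert, Set.mem_insert_iff, Finset.mem_coe,
            Finset.mem_erase] at hb
          rcases hb with rfl | ⟨-, -, hbπ⟩
          · rcases hab with hab | hab
            · exact absurd (huniq A ⟨hA, hab⟩).symm hC.1
            · exact absurd (huniq B ⟨hB, hab⟩).symm hC.2
          · exact huniq b ⟨Finset.mem_coe.mpr hbπ, hab⟩
  · have h2 : 2 ≤ π.card := Finset.one_lt_card.mpr ⟨A, hA, B, hB, hAB⟩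
    have hBe : B ∈ π.erase A := Finset.mem_erase.mpr ⟨(fun e => hAB e.symm), hB⟩
    rw [Finset.card_insert_of_notMem hnotmem, Finset.card_erase_of_mem hBe,
      Finset.card_erase_of_mem hA]
    omega

end Aux

open SecCoal
theorem stmt1 {V : Type*} [Fintype V] (G : SimpleGraph V) :
    ∃ π : Finset (Set V), IsSecPartition G π := by
  classical
  by_cases hc : ∀ u v : V, u ≠ v → G.Adj u v
  · -- complete graph: singleton partition
    refine ⟨Finset.univ.image fun v : V => ({v} : Set V), ⟨?_, ?_⟩, ?_⟩
    · intro hmem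
      simp only [Finset.coe_image, Finset.coe_univ, Set.image_univ, Set.mem_range] at hmem
      obtain ⟨v, hv⟩ := hmem
      exact Set.singleton_ne_empty v hv
    · intro a
      refine ⟨{a}, ⟨?_, rfl⟩, ?_⟩
      · simp
      · rintro b ⟨hb, hab⟩
        simp only [Finset.mem_coe, Finset.mem_image, Finset.mem_univ, true_and] at hb
        obtain ⟨v, rfl⟩ := hb
        rw [Set.mem_singleton_iff] at hab
        rw [hab]
    · intro A hA
      simp only [Finset.mem_image, Finset.mem_univ, true_and] at hA
      obtain ⟨v, rfl⟩ := hA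
      left
      refine ⟨v, rfl, ?_, ?_, ?_⟩
      · have hns : G.neighborSet v = {v}ᶜ := by
          ext u
          simp only [SimpleGraph.mem_neighborSet, Set.mem_compl_iff, Set.mem_singleton_iff]
          exact ⟨fun h => (G.ne_of_adj h).symm, fun h => hc v u (Ne.symm h)⟩
        rw [deg, hns, Set.compl_eq_univ_diff,
          Set.ncard_diff (Set.subset_univ _), Set.ncard_univ, Set.ncard_singleton]
      · intro u hu
        exact ⟨v, rfl, hc v u fun e => hu (e ▸ rfl)⟩
      · intro u hu
        refine ⟨v, rfl, hc v u fun e => hu (e ▸ rfl), ?_⟩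
        have : (({v} : Set V) \ {v}) ∪ {u} = {u} := by simp
        rw [this]
        intro x hx
        exact ⟨u, rfl, hc u x fun e => hx (e ▸ rfl)⟩
  · -- not complete
    push_neg at hc
    obtain ⟨u0, w0, hne0, hnadj0⟩ := hc
    -- no singleton is secure dominating
    have hsing : ∀ v : V, ¬ IsSecureDominating G ({v} : Set V) := by
      intro v ⟨hdom, hsec⟩
      have hdomall : ∀ x : V, x ≠ v → G.Adj v x := by
        intro x hx
        obtain ⟨y, hy, hadj⟩ := hdom x (fun e => hx e)
        rw [Set.mem_singleton_iff] at hy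
        exact hy ▸ hadj
      have hfull : ∀ x : V, x ≠ v → ∀ z : V, z ≠ x → G.Adj x z := by
        intro x hx z hz
        obtain ⟨y, hy, -, hdom'⟩ := hsec x (fun e => hx e)
        rw [Set.mem_singleton_iff] at hy
        subst hy
        have hsetdom : IsDominating G ({x} : Set V) := by
          have hset : (({y} : Set V) \ {y}) ∪ {x} = {x} := by simp
          rwa [hset] at hdom'
        obtain ⟨t, ht, hadj⟩ := hsetdom z (fun e => hz e)
        rw [Set.mem_singleton_iff] at ht
        exact ht ▸ hadj
      by_cases huv : u0 = v
      · subst huv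
        exact hnadj0 ((hfull w0 (Ne.symm hne0) u0 hne0).symm)
      · exact hnadj0 (hfull u0 huv w0 (Ne.symm hne0))
    -- the family of partitions into non-secure-dominating parts
    set P : Set (Finset (Set V)) :=
      {π | Setoid.IsPartition (↑π : Set (Set V)) ∧ ∀ A ∈ π, ¬ IsSecureDominating G A} with hP
    have hP0 : (Finset.univ.image fun v : V => ({v} : Set V)) ∈ P := by
      refine ⟨⟨?_, ?_⟩, ?_⟩
      · intro hmem
        simp only [Finset.coe_image, Finset.coe_univ, Set.image_univ, Set.mem_range] at hmem
        obtain ⟨v, hv⟩ := hmem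
        exact Set.singleton_ne_empty v hv
      · intro a
        refine ⟨{a}, ⟨?_, rfl⟩, ?_⟩
        · simp
        · rintro b ⟨hb, hab⟩
          simp only [Finset.mem_coe, Finset.mem_image, Finset.mem_univ, true_and] at hb
          obtain ⟨v, rfl⟩ := hb
          rw [Set.mem_singleton_iff] at hab
          rw [hab]
      · intro A hA
        simp only [Finset.mem_image, Finset.mem_univ, true_and] at hA
        obtain ⟨v, rfl⟩ := hA
        exact hsing v
    -- minimal-cardinality member
    have hSne : {n | ∃ π ∈ P, π.card = n}.Nonempty := ⟨_, _, hP0, rfl⟩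
    obtain ⟨π, hπP, hπcard⟩ := Nat.sInf_mem hSne
    have hmin : ∀ π' ∈ P, sInf {n | ∃ π ∈ P, π.card = n} ≤ π'.card :=
      fun π' h => Nat.sInf_le ⟨π', h, rfl⟩
    obtain ⟨hpart, hnsd⟩ := hπP
    -- π has at least two parts
    have h2 : 2 ≤ π.card := by
      rcases Nat.lt_or_ge π.card 2 with hlt | hge
      · interval_cases hcard : π.card
        · exfalso
          obtain ⟨C, ⟨hC, -⟩, -⟩ := hpart.2 u0
          rw [Finset.card_eq_zero.mp hcard] at hC
          simp at hC
        · exfalso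
          obtain ⟨C, hC⟩ := Finset.card_eq_one.mp hcard
          have hCuniv : C = Set.univ := by
            ext a
            simp only [Set.mem_univ, iff_true]
            obtain ⟨D, ⟨hD, haD⟩, -⟩ := hpart.2 a
            rw [hC] at hD
            simp only [Finset.coe_singleton, Set.mem_singleton_iff] at hD
            exact hD ▸ haD
          exact hnsd C (hC ▸ Finset.mem_singleton_self C) (hCuniv ▸ secCoal_univ_sd G)
      · exact hge
    refine ⟨π, hpart, ?_⟩
    intro A hA
    right
    refine ⟨hnsd A hA, ?_⟩
    obtain ⟨B, hB, hBA⟩ := Finset.exists_mem_ne (s := π) (by omega) A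
    refine ⟨B, hB, hBA, ?_⟩
    by_contra hABnsd
    have hmerge := secCoal_merge hpart hA hB (Ne.symm hBA)
    have hmem : insert (A ∪ B) ((π.erase A).erase B) ∈ P := by
      refine ⟨hmerge.1, ?_⟩
      intro C hC
      rcases Finset.mem_insert.mp hC with rfl | hC
      · exact hABnsd
      · exact hnsd C (Finset.mem_of_mem_erase (Finset.mem_of_mem_erase hC))
    have hle := hmin (insert (A ∪ B) ((π.erase A).erase B)) hmem
    rw [hmerge.2] at hle
    omega
end

section
/- If G is a graph that is neither a complete graph K_n nor an edgeless graph on n vertices, then SEC(G) ≥ 3. -/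
open SecCoal
theorem stmt2 {V : Type*} [Fintype V] (G : SimpleGraph V)
    (hne1 : G ≠ ⊤) (hne2 : G ≠ ⊥) :
    3 ≤ SEC G := by
  classical
  -- an edge exists
  obtain ⟨a, b, hab⟩ : ∃ a b, G.Adj a b := by
    by_contra h
    push_neg at h
    apply hne2
    ext u v
    simp [h u v]
  -- a non-edge exists
  obtain ⟨p, q, hpq, hnadj⟩ : ∃ p q, p ≠ q ∧ ¬ G.Adj p q := by
    by_contra h
    push_neg at h
    apply hne1
    ext u v
    simp only [SimpleGraph.top_adj]
    exact ⟨fun h' => G.ne_of_adj h', fun h' => h u v h'⟩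
  -- singletons are never secure dominating
  have hsingle : ∀ x : V, ¬ IsSecureDominating G ({x} : Set V) := by
    rintro x ⟨hdom, hsec⟩
    by_cases hxp : x = p
    · obtain ⟨u, hu, hadj⟩ := hdom q (by
        simp only [Set.mem_singleton_iff]
        intro h
        exact hpq (h ▸ hxp).symm)
      rw [Set.mem_singleton_iff] at hu
      subst hu
      exact hnadj (hxp ▸ hadj)
    · by_cases hxq : x = q
      · obtain ⟨u, hu, hadj⟩ := hdom p (by
          simp only [Set.mem_singleton_iff]
          intro h
          exact hxp h.symm)
        rw [Set.mem_singleton_iff] at hu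
        subst hu
        exact hnadj (hxq ▸ hadj).symm
      · obtain ⟨v, hv, hadjv, hdom'⟩ := hsec p (by
          simp only [Set.mem_singleton_iff]
          intro h
          exact hxp h.symm)
        obtain ⟨u, hu, hadj'⟩ := hdom' q (by
          simp only [Set.mem_union, Set.mem_diff, Set.mem_singleton_iff]
          rintro (⟨rfl, -⟩ | rfl)
          · exact hxq rfl
          · exact hpq rfl)
        rw [Set.mem_singleton_iff] at hv
        subst hv
        simp only [Set.mem_union, Set.mem_diff, Set.mem_singleton_iff] at hu
        rcases hu with ⟨rfl, hne⟩ | rfl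
        · exact hne rfl
        · exact hnadj hadj'
  -- complement of a singleton of a non-isolated vertex is secure dominating
  have hcompl : ∀ z : V, (∃ w, G.Adj z w) → IsSecureDominating G (({z}ᶜ : Set V)) := by
    rintro z ⟨w, hzw⟩
    have hwz : w ≠ z := fun h => G.loopless.irrefl z (h ▸ hzw)
    constructor
    · intro v hv
      rw [Set.notMem_compl_iff, Set.mem_singleton_iff] at hv
      subst hv
      exact ⟨w, by simpa [Set.mem_compl_iff] using hwz, hzw.symm⟩
    · intro u hu
      rw [Set.notMem_compl_iff, Set.mem_singleton_iff] at hu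
      refine ⟨w, by simpa [Set.mem_compl_iff] using hwz, by rw [hu]; exact hzw.symm, ?_⟩
      intro x hx
      simp only [Set.mem_union, Set.mem_diff, Set.mem_compl_iff, Set.mem_singleton_iff,
        not_or, not_and, not_not] at hx
      obtain ⟨h1, h2⟩ := hx
      have hxz : ¬ x = z := by rw [← hu]; exact h2
      have hxw : x = w := h1 hxz
      refine ⟨z, Or.inr ?_, ?_⟩
      · rw [Set.mem_singleton_iff, hu]
      · rw [hxw]; exact hzw
  -- set of isolated vertices
  have hIF : ¬ IsSecureDominating G ({v | ∀ w, ¬ G.Adj v w} : Set V) := by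
    rintro ⟨hdom, -⟩
    have haI : a ∉ ({v | ∀ w, ¬ G.Adj v w} : Set V) := fun h => h b hab
    obtain ⟨u, hu, hadj⟩ := hdom a haI
    exact hu a hadj
  -- a maximal non-secure-dominating set containing all isolated vertices
  obtain ⟨M, hMF, hMmax⟩ := Set.Finite.exists_maximalFor id
    ({S : Set V | {v | ∀ w, ¬ G.Adj v w} ⊆ S ∧ ¬ IsSecureDominating G S})
    (Set.toFinite _) ⟨{v | ∀ w, ¬ G.Adj v w}, subset_rfl, hIF⟩
  obtain ⟨hIM, hMnsds⟩ := hMF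
  simp only [id] at hMmax
  have hmax : ∀ u, u ∉ M → IsSecureDominating G (M ∪ {u}) := by
    intro u hu
    by_contra hcon
    have h1 : (M ∪ {u}) ∈ {S : Set V | {v | ∀ w, ¬ G.Adj v w} ⊆ S ∧ ¬ IsSecureDominating G S} :=
      ⟨hIM.trans Set.subset_union_left, hcon⟩
    have h2 := hMmax h1 Set.subset_union_left
    apply hu
    exact h2 (Set.mem_union_right M rfl)
  -- two distinct vertices outside M
  obtain ⟨c1, hc1⟩ : ∃ c, c ∉ M := by
    by_contra h
    push_neg at h
    apply hMnsds
    rw [Set.eq_univ_of_forall h]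
    exact ⟨fun v hv => absurd (Set.mem_univ v) hv, fun u hu => absurd (Set.mem_univ u) hu⟩
  obtain ⟨c2, hc2, hc21⟩ : ∃ c, c ∉ M ∧ c ≠ c1 := by
    by_contra h
    push_neg at h
    have hM : M = ({c1}ᶜ : Set V) := by
      ext v
      simp only [Set.mem_compl_iff, Set.mem_singleton_iff]
      constructor
      · rintro hv rfl; exact hc1 hv
      · intro hv; by_contra hvM; exact hv (h v hvM)
    apply hMnsds
    rw [hM]
    apply hcompl
    have hnI : c1 ∉ ({v | ∀ w, ¬ G.Adj v w} : Set V) := fun hc => hc1 (hIM hc)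
    simpa only [Set.mem_setOf_eq, not_forall, not_not] using hnI
  have hMne : M.Nonempty := by
    rcases Set.eq_empty_or_nonempty M with h | h
    · exfalso
      have h2 := hmax c1 hc1
      rw [h, Set.empty_union] at h2
      exact hsingle c1 h2
    · exact h
  -- the partition
  set Cs : Finset V := Finset.univ.filter (fun c => c ∉ M) with hCs
  have hmemCs : ∀ c, c ∈ Cs ↔ c ∉ M := by intro c; simp [hCs]
  set π : Finset (Set V) := insert M (Cs.image fun c => ({c} : Set V)) with hπ
  have hMnotim : M ∉ Cs.image (fun c => ({c} : Set V)) := by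
    simp only [Finset.mem_image]
    rintro ⟨c, hcCs, hcM⟩
    rw [hmemCs] at hcCs
    apply hcCs
    rw [← hcM]
    exact rfl
  have hcard : 3 ≤ π.card := by
    rw [hπ, Finset.card_insert_of_notMem hMnotim,
      Finset.card_image_of_injective _ (fun x y hxy => Set.singleton_injective hxy)]
    have hsub : ({c1, c2} : Finset V) ⊆ Cs := by
      intro x hx
      rcases Finset.mem_insert.mp hx with rfl | hx
      · rw [hmemCs]; exact hc1
      · rw [Finset.mem_singleton] at hx; subst hx; rw [hmemCs]; exact hc2
    have h2 : 2 ≤ Cs.card := by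
      have := Finset.card_le_card hsub
      rwa [Finset.card_pair hc21.symm] at this
    omega
  have hpart : IsSecPartition G π := by
    constructor
    · constructor
      · -- ∅ ∉ ↑π
        simp only [hπ, Finset.coe_insert, Set.mem_insert_iff, Finset.coe_image, Set.mem_image,
          Finset.mem_coe]
        rintro (h | ⟨c, hc, h⟩)
        · exact hMne.ne_empty h.symm
        · exact Set.singleton_ne_empty c h
      · intro v
        by_cases hvM : v ∈ M
        · refine ⟨M, ⟨?_, hvM⟩, ?_⟩
          · exact Finset.mem_coe.mpr (Finset.mem_insert_self _ _)
          · rintro B ⟨hB, hvB⟩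
            rcases Finset.mem_insert.mp (Finset.mem_coe.mp hB) with rfl | hB'
            · rfl
            · obtain ⟨c, hcCs, rfl⟩ := Finset.mem_image.mp hB'
              rw [hmemCs] at hcCs
              rw [Set.mem_singleton_iff] at hvB
              exact absurd (hvB ▸ hvM) hcCs
        · refine ⟨({v} : Set V), ⟨?_, rfl⟩, ?_⟩
          · refine Finset.mem_coe.mpr (Finset.mem_insert_of_mem (Finset.mem_image.mpr ⟨v, ?_, rfl⟩))
            rw [hmemCs]; exact hvM
          · rintro B ⟨hB, hvB⟩
            rcases Finset.mem_insert.mp (Finset.mem_coe.mp hB) with rfl | hB'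
            · exact absurd hvB hvM
            · obtain ⟨c, hcCs, rfl⟩ := Finset.mem_image.mp hB'
              rw [Set.mem_singleton_iff] at hvB
              rw [hvB]
    · intro A hA
      rcases Finset.mem_insert.mp hA with rfl | hA'
      · right
        refine ⟨hMnsds, {c1}, ?_, ?_, hmax c1 hc1⟩
        · exact Finset.mem_insert_of_mem (Finset.mem_image.mpr ⟨c1, (hmemCs c1).mpr hc1, rfl⟩)
        · intro h
          apply hc1
          rw [← h]
          exact rfl
      · obtain ⟨c, hcCs, rfl⟩ := Finset.mem_image.mp hA'
        rw [hmemCs] at hcCs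
        right
        refine ⟨hsingle c, M, Finset.mem_insert_self _ _, ?_, ?_⟩
        · intro h
          apply hcCs
          rw [h]
          exact rfl
        · rw [Set.union_comm]; exact hmax c hcCs
  have hbdd : BddAbove {k | ∃ π' : Finset (Set V), IsSecPartition G π' ∧ π'.card = k} := by
    refine ⟨Fintype.card (Set V), ?_⟩
    rintro k ⟨π', -, rfl⟩
    exact Finset.card_le_univ π'
  have hmem : π.card ∈ {k | ∃ π' : Finset (Set V), IsSecPartition G π' ∧ π'.card = k} :=
    ⟨π, hpart, rfl⟩
  exact le_trans hcard (le_csSup hbdd hmem)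
end

section
/- If a vertex set Z of a graph G is not a dominating set, then in any secure coalition partition π containing Z, the number of parts of π forming a secure coalition with Z is at most Δ(G)+1. -/
open SecCoal
theorem stmt6 {V : Type*} [Fintype V] (G : SimpleGraph V)
    (π : Finset (Set V)) (Z : Set V)
    (hπ : IsSecPartition G π) (hZ : Z ∈ π) (hZd : ¬ IsDominating G Z) :
    {A ∈ (↑π : Set (Set V)) | FormsSecCoalition G Z A}.ncard ≤ maxDeg G + 1 := by
  -- find a vertex v not dominated by Z
  obtain ⟨v, hvZ, hvN⟩ : ∃ v, v ∉ Z ∧ ∀ u ∈ Z, ¬ G.Adj u v := by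
    by_contra h
    push_neg at h
    exact hZd (fun w hw => h w hw)
  set T : Set V := insert v (G.neighborSet v) with hT
  have hTfin : T.Finite := Set.toFinite _
  set s : Set (Set V) := {A ∈ (↑π : Set (Set V)) | FormsSecCoalition G Z A} with hs
  -- every A in s contains an element of T
  have hmem : ∀ A ∈ s, ∃ x, x ∈ A ∧ x ∈ T := by
    rintro A ⟨hAπ, hdisj, _, _, hdom, _⟩
    rcases Classical.em (v ∈ Z ∪ A) with hv | hv
    · rcases hv with hv | hv
      · exact absurd hv hvZ
      · exact ⟨v, hv, Or.inl rfl⟩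
    · obtain ⟨u, hu, hadj⟩ := hdom v hv
      rcases hu with hu | hu
      · exact absurd hadj (hvN u hu)
      · exact ⟨u, hu, Or.inr hadj.symm⟩
  classical
  let f : Set V → V := fun A => if h : ∃ x, x ∈ A ∧ x ∈ T then h.choose else v
  have hmaps : ∀ A ∈ s, f A ∈ T := by
    intro A hA
    have h := hmem A hA
    simp only [f, dif_pos h]
    exact h.choose_spec.2
  have hinj : Set.InjOn f s := by
    intro A hA B hB hfAB
    have hA' := hmem A hA
    have hB' := hmem B hB
    have h1 : f A ∈ A := by simp only [f, dif_pos hA']; exact hA'.choose_spec.1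
    have h2 : f B ∈ B := by simp only [f, dif_pos hB']; exact hB'.choose_spec.1
    rw [hfAB] at h1
    obtain ⟨_, hu⟩ := (hπ.1.2 (f B)).exists
    obtain ⟨C, hC, hCu⟩ := hπ.1.2 (f B)
    have := hCu A ⟨hA.1, h1⟩
    have := hCu B ⟨hB.1, h2⟩
    subst_vars; rfl
  have hcard : s.ncard ≤ T.ncard :=
    Set.ncard_le_ncard_of_injOn f hmaps hinj hTfin
  have hTc : T.ncard = deg G v + 1 := by
    rw [hT, Set.ncard_insert_of_notMem (by simp [SimpleGraph.irrefl]) (Set.toFinite _)]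
    rfl
  have hdegle : deg G v ≤ maxDeg G :=
    le_csSup ((Set.finite_range (deg G)).bddAbove) ⟨v, rfl⟩
  calc s.ncard ≤ T.ncard := hcard
    _ = deg G v + 1 := hTc
    _ ≤ maxDeg G + 1 := by omega
end

section
/- For any graph G of order n, SEC(G) ≤ n − γ_s(G) + 2, where γ_s(G) is the secure domination number of G. -/
open SecCoal

lemma count_parts {V : Type*} [Fintype V] {π π' : Finset (Set V)} {S : Set V}
    (hp : Setoid.IsPartition (↑π : Set (Set V))) (hsub : π' ⊆ π)
    (hd : ∀ C ∈ π', Disjoint C S) : π'.card ≤ Sᶜ.ncard := by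
  classical
  rcases Finset.eq_empty_or_nonempty π' with rfl | ⟨C0, hC0⟩
  · simp
  have hne : ∀ C ∈ π', (C : Set V).Nonempty := by
    intro C hC
    rcases Set.eq_empty_or_nonempty C with h | h
    · exact absurd (show (∅ : Set V) ∈ (↑π : Set (Set V)) by exact_mod_cast h ▸ hsub hC) hp.1
    · exact h
  have hV : Nonempty V := ⟨(hne C0 hC0).some⟩
  set f : Set V → V := fun C => if h : C.Nonempty then h.some else Classical.arbitrary V with hf
  have hmem : ∀ C ∈ π', f C ∈ C := by
    intro C hC
    simp only [hf, dif_pos (hne C hC)]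
    exact (hne C hC).some_mem
  have key : π'.card ≤ (Sᶜ.toFinset).card := by
    apply Finset.card_le_card_of_injOn f
    · intro C hC
      rw [Finset.mem_coe, Set.mem_toFinset]
      exact fun hS => (hd C hC).ne_of_mem (hmem C hC) hS rfl
    · intro C hC D hD hCD
      rcases hp.2 (f C) with ⟨E, _, hun⟩
      have h1 := hun C ⟨by exact_mod_cast hsub hC, hmem C hC⟩
      have h2 := hun D ⟨by exact_mod_cast hsub hD, hCD ▸ hmem D hD⟩
      rw [h1, h2]
  rwa [Set.ncard_eq_toFinset_card'] at *

lemma part_disjoint {V : Type*} {π : Finset (Set V)}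
    (hp : Setoid.IsPartition (↑π : Set (Set V))) {A C : Set V} (hA : A ∈ π) (hC : C ∈ π)
    (hne : C ≠ A) : Disjoint C A := by
  rw [Set.disjoint_left]
  intro x hxC hxA
  rcases hp.2 x with ⟨E, _, hun⟩
  exact hne ((hun C ⟨by exact_mod_cast hC, hxC⟩).trans (hun A ⟨by exact_mod_cast hA, hxA⟩).symm)

theorem stmt7 {V : Type*} [Fintype V] (G : SimpleGraph V) :
    SEC G ≤ Fintype.card V - secDomNum G + 2 := by
  classical
  apply csSup_le'
  rintro k ⟨π, ⟨hp, hparts⟩, rfl⟩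
  by_cases hk : π.card ≤ 2
  · omega
  have hπne : π.Nonempty := Finset.card_pos.mp (by omega)
  obtain ⟨A, hA⟩ := hπne
  have main : ∀ S : Set V, IsSecureDominating G S →
      secDomNum G ≤ S.ncard ∧ S.ncard ≤ Fintype.card V := by
    intro S hS
    constructor
    · exact Nat.sInf_le ⟨S, hS, rfl⟩
    · rw [Set.ncard_eq_toFinset_card']
      exact (Finset.card_le_card (Finset.subset_univ _)).trans (by simp)
  have hcompl : ∀ S : Set V, Sᶜ.ncard = Fintype.card V - S.ncard := by
    intro S
    have := Set.ncard_add_ncard_compl S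
    rw [Nat.card_eq_fintype_card] at this
    omega
  rcases hparts A hA with ⟨v, rfl, _, hsec⟩ | ⟨_, B, hB, hBA, hsec⟩
  · obtain ⟨h1, h2⟩ := main _ hsec
    have hcount : (π.erase {v}).card ≤ (({v} : Set V)ᶜ).ncard := by
      apply count_parts hp (Finset.erase_subset _ _)
      intro C hC
      exact part_disjoint hp hA (Finset.mem_of_mem_erase hC) (Finset.ne_of_mem_erase hC)
    rw [hcompl] at hcount
    have := Finset.card_erase_of_mem hA
    omega
  · obtain ⟨h1, h2⟩ := main _ hsec
    have hcount : (π \ {A, B}).card ≤ ((A ∪ B)ᶜ).ncard := by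
      apply count_parts hp (Finset.sdiff_subset)
      intro C hC
      rw [Finset.mem_sdiff, Finset.mem_insert, Finset.mem_singleton] at hC
      push_neg at hC
      exact Set.disjoint_union_right.mpr
        ⟨part_disjoint hp hA hC.1 hC.2.1, part_disjoint hp hB hC.1 hC.2.2⟩
    rw [hcompl] at hcount
    have hsub : {A, B} ⊆ π := by
      intro x hx
      rw [Finset.mem_insert, Finset.mem_singleton] at hx
      rcases hx with rfl | rfl <;> assumption
    have hcard2 : ({A, B} : Finset (Set V)).card = 2 := by
      rw [Finset.card_insert_of_notMem (by simpa using hBA.symm), Finset.card_singleton]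
    have := Finset.card_sdiff_of_subset hsub
    omega
end

section
/- For any tree T of order n, SEC(T) = n if and only if T is isomorphic to the path P_n with n ≤ 4. -/
open SecCoal SimpleGraph

section Helpers

variable {V W : Type*}

lemma walk_closed {G : SimpleGraph V} (s : Set V)
    (hs : ∀ x ∈ s, ∀ y, G.Adj x y → y ∈ s)
    {x y : V} (w : G.Walk x y) (hx : x ∈ s) : y ∈ s := by
  induction w with
  | nil => exact hx
  | cons h p ih => exact ih (hs _ hx _ h)

lemma tree_tri {G : SimpleGraph V} (hT : G.IsTree) {a b c : V}
    (hab : G.Adj a b) (hbc : G.Adj b c) (hac : G.Adj a c) : False := by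
  have hp : (SimpleGraph.Walk.cons hab (SimpleGraph.Walk.cons hbc SimpleGraph.Walk.nil)).IsPath := by
    simp [Walk.isPath_def, hab.ne, hbc.ne, hac.ne]
  have h := hT.IsAcyclic.path_unique (Path.singleton hac) ⟨_, hp⟩
  have hl := congrArg (fun p : G.Path a c => p.1.length) h
  simp [Path.singleton] at hl

lemma tree_c4 {G : SimpleGraph V} (hT : G.IsTree) {a b c d : V}
    (hab : G.Adj a b) (hbc : G.Adj b c) (hcd : G.Adj c d) (hda : G.Adj d a)
    (hac : a ≠ c) (hbd : b ≠ d) : False := by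
  have hp1 : (SimpleGraph.Walk.cons hab (SimpleGraph.Walk.cons hbc SimpleGraph.Walk.nil)).IsPath := by
    simp [Walk.isPath_def, hab.ne, hbc.ne, hac]
  have hp2 : (SimpleGraph.Walk.cons hda.symm (SimpleGraph.Walk.cons hcd.symm SimpleGraph.Walk.nil)).IsPath := by
    simp [Walk.isPath_def, hda.ne', hcd.ne', hac]
  have h := hT.IsAcyclic.path_unique ⟨_, hp1⟩ ⟨_, hp2⟩
  have hs := congrArg (fun p : G.Path a c => p.1.support) h
  simp at hs
  exact hbd hs

lemma card_le_four_of_cover [Fintype V] {x0 x1 x2 x3 : V}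
    (h : ∀ w : V, w = x0 ∨ w = x1 ∨ w = x2 ∨ w = x3) : Fintype.card V ≤ 4 := by
  classical
  have hsub : (Finset.univ : Finset V) ⊆ {x0, x1, x2, x3} := by
    intro w _; rcases h w with h|h|h|h <;> simp [h]
  have h1 := Finset.card_insert_le x0 ({x1, x2, x3} : Finset V)
  have h2 := Finset.card_insert_le x1 ({x2, x3} : Finset V)
  have h3 := Finset.card_insert_le x2 ({x3} : Finset V)
  have h4 : ({x3} : Finset V).card = 1 := Finset.card_singleton _
  have := Finset.card_le_card hsub
  rw [Finset.card_univ] at this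
  omega

lemma card_le_three_of_cover [Fintype V] {x0 x1 x2 : V}
    (h : ∀ w : V, w = x0 ∨ w = x1 ∨ w = x2) : Fintype.card V ≤ 3 := by
  classical
  have hsub : (Finset.univ : Finset V) ⊆ {x0, x1, x2} := by
    intro w _; rcases h w with h|h|h <;> simp [h]
  have h1 := Finset.card_insert_le x0 ({x1, x2} : Finset V)
  have h2 := Finset.card_insert_le x1 ({x2} : Finset V)
  have h3 : ({x2} : Finset V).card = 1 := Finset.card_singleton _
  have := Finset.card_le_card hsub
  rw [Finset.card_univ] at this
  omega

lemma partition_card_le [Fintype V] [Nonempty V] {π : Finset (Set V)}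
    (hπ : Setoid.IsPartition (↑π : Set (Set V))) : π.card ≤ Fintype.card V := by
  classical
  set f : Set V → V := fun A => if h : A.Nonempty then h.choose else Classical.arbitrary V with hf
  have hmem : ∀ A ∈ π, f A ∈ A := by
    intro A hA
    have hne : A.Nonempty := by
      rcases Set.eq_empty_or_nonempty A with rfl | h
      · exact absurd (Finset.mem_coe.mpr hA) hπ.1
      · exact h
    simp only [hf, dif_pos hne]
    exact hne.choose_spec
  have hinj : Set.InjOn f ↑π := by
    intro A hA B hB hAB
    rw [Finset.mem_coe] at hA hB
    obtain ⟨C, _, hC⟩ := hπ.2 (f A)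
    have h1 := hC A ⟨hA, hmem A hA⟩
    have h2 := hC B ⟨hB, hAB ▸ hmem B hB⟩
    rw [h1, h2]
  have := Finset.card_le_card_of_injOn (t := Finset.univ) f (fun a _ => Finset.mem_univ (f a)) hinj
  simpa using this

lemma parts_singleton [Fintype V] {π : Finset (Set V)}
    (hπ : Setoid.IsPartition (↑π : Set (Set V))) (hcard : π.card = Fintype.card V)
    {A : Set V} (hA : A ∈ π) : ∃ v, A = {v} := by
  classical
  have hu := hπ.2
  set g : V → {A : Set V // A ∈ π} := fun v =>
    ⟨(hu v).choose, Finset.mem_coe.mp (hu v).choose_spec.1.1⟩ with hg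
  have hmemg : ∀ v, v ∈ (g v).1 := fun v => (hu v).choose_spec.1.2
  have huniq : ∀ v (B : Set V), B ∈ π → v ∈ B → (g v).1 = B := by
    intro v B hB hvB
    exact ((hu v).choose_spec.2 B ⟨Finset.mem_coe.mpr hB, hvB⟩).symm
  have hne : A.Nonempty := by
    rcases Set.eq_empty_or_nonempty A with rfl | h
    · exact absurd (Finset.mem_coe.mpr hA) hπ.1
    · exact h
  obtain ⟨x, hx⟩ := hne
  have hsurj : Function.Surjective g := by
    rintro ⟨B, hB⟩
    have hneB : B.Nonempty := by
      rcases Set.eq_empty_or_nonempty B with rfl | h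
      · exact absurd (Finset.mem_coe.mpr hB) hπ.1
      · exact h
    obtain ⟨y, hy⟩ := hneB
    exact ⟨y, Subtype.ext (huniq y B hB hy)⟩
  have hbij : Function.Bijective g := by
    rw [Fintype.bijective_iff_surjective_and_card]
    refine ⟨hsurj, ?_⟩
    rw [Fintype.card_coe, hcard]
  refine ⟨x, Set.eq_singleton_iff_unique_mem.mpr ⟨hx, ?_⟩⟩
  intro y hy
  have : g y = g x := by
    apply Subtype.ext
    rw [huniq y A hA hy, huniq x A hA hx]
  exact hbij.1 this

lemma exists_singleton_partition [Fintype V] :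
    ∃ π : Finset (Set V), Setoid.IsPartition (↑π : Set (Set V)) ∧
      π.card = Fintype.card V ∧ (∀ A : Set V, A ∈ π ↔ ∃ v, A = {v}) := by
  classical
  refine ⟨Finset.univ.image (fun v => ({v} : Set V)), ⟨?_, ?_⟩, ?_, ?_⟩
  · intro h0
    simp only [Finset.coe_image, Finset.coe_univ, Set.image_univ, Set.mem_range] at h0
    obtain ⟨v, hv⟩ := h0
    exact (Set.singleton_ne_empty v) hv
  · intro a
    refine ⟨{a}, ⟨by simp, rfl⟩, ?_⟩
    rintro B ⟨hB, haB⟩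
    simp only [Finset.coe_image, Finset.coe_univ, Set.image_univ, Set.mem_range] at hB
    obtain ⟨v, rfl⟩ := hB
    rw [Set.mem_singleton_iff] at haB
    rw [haB]
  · rw [Finset.card_image_of_injective _ (fun a b h => by
      simpa [Set.singleton_eq_singleton_iff] using h)]
    exact Finset.card_univ
  · intro A
    simp only [Finset.mem_image, Finset.mem_univ, true_and]
    constructor
    · rintro ⟨v, rfl⟩; exact ⟨v, rfl⟩
    · rintro ⟨v, rfl⟩; exact ⟨v, rfl⟩

lemma sec_le [Fintype V] [Nonempty V] (G : SimpleGraph V) : SEC G ≤ Fintype.card V := by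
  apply csSup_le'
  rintro k ⟨π, hπ, rfl⟩
  exact partition_card_le hπ.1

lemma sec_ge [Fintype V] [Nonempty V] (G : SimpleGraph V) {π : Finset (Set V)}
    (hπ : IsSecPartition G π) : π.card ≤ SEC G := by
  apply le_csSup
  · exact ⟨Fintype.card V, by rintro k ⟨π', hπ', rfl⟩; exact partition_card_le hπ'.1⟩
  · exact ⟨π, hπ, rfl⟩

lemma sec_eq_card [Fintype V] [Nonempty V] {G : SimpleGraph V} {π : Finset (Set V)}
    (hπ : IsSecPartition G π) (hc : π.card = Fintype.card V) : SEC G = Fintype.card V :=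
  le_antisymm (sec_le G) (hc ▸ sec_ge G hπ)

lemma exists_partition_of_sec_eq [Fintype V] [Nonempty V] {G : SimpleGraph V}
    (h : SEC G = Fintype.card V) :
    ∃ π : Finset (Set V), IsSecPartition G π ∧ π.card = Fintype.card V := by
  have hpos : 0 < Fintype.card V := Fintype.card_pos
  have hne : {k | ∃ π : Finset (Set V), IsSecPartition G π ∧ π.card = k}.Nonempty := by
    by_contra h'
    rw [Set.not_nonempty_iff_eq_empty] at h'
    unfold SEC at h
    rw [h', csSup_empty] at h
    simp at h
    omega
  have hbdd : BddAbove {k | ∃ π : Finset (Set V), IsSecPartition G π ∧ π.card = k} :=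
    ⟨Fintype.card V, by rintro k ⟨π', hπ', rfl⟩; exact partition_card_le hπ'.1⟩
  have hmem := Nat.sSup_mem hne hbdd
  rw [show sSup {k | ∃ π : Finset (Set V), IsSecPartition G π ∧ π.card = k} = SEC G from rfl,
    h] at hmem
  exact hmem

variable {G : SimpleGraph V} {H : SimpleGraph W}

lemma iso_dominating (e : G ≃g H) {D : Set V} (h : IsDominating G D) :
    IsDominating H (⇑e '' D) := by
  intro w hw
  have hw' : e.symm w ∉ D := by
    intro h'
    exact hw ⟨_, h', e.apply_symm_apply w⟩
  obtain ⟨u, hu, hadj⟩ := h _ hw'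
  refine ⟨e u, ⟨u, hu, rfl⟩, ?_⟩
  rw [← e.apply_symm_apply w]
  exact e.map_adj_iff.mpr hadj

lemma iso_secure (e : G ≃g H) {S : Set V} (h : IsSecureDominating G S) :
    IsSecureDominating H (⇑e '' S) := by
  refine ⟨iso_dominating e h.1, ?_⟩
  intro u hu
  have hu' : e.symm u ∉ S := by
    intro h'
    exact hu ⟨_, h', e.apply_symm_apply u⟩
  obtain ⟨v, hv, hadj, hdom⟩ := h.2 _ hu'
  refine ⟨e v, ⟨v, hv, rfl⟩, ?_, ?_⟩
  · rw [← e.apply_symm_apply u]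
    exact e.map_adj_iff.mpr hadj
  · have heq : (⇑e '' S \ {e v}) ∪ {u} = ⇑e '' ((S \ {v}) ∪ {e.symm u}) := by
      rw [Set.image_union, Set.image_diff e.injective, Set.image_singleton,
        Set.image_singleton, e.apply_symm_apply]
    rw [heq]
    exact iso_dominating e hdom

lemma iso_secure_iff (e : G ≃g H) {S : Set V} :
    IsSecureDominating H (⇑e '' S) ↔ IsSecureDominating G S := by
  constructor
  · intro h
    have := iso_secure e.symm h
    rwa [show ⇑e.symm '' (⇑e '' S) = S from e.toEquiv.symm_image_image S] at this
  · exact iso_secure e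

lemma iso_deg (e : G ≃g H) (v : V) : deg H (e v) = deg G v := by
  unfold deg
  have hset : H.neighborSet (e v) = ⇑e '' G.neighborSet v := by
    ext w
    simp only [mem_neighborSet, Set.mem_image]
    constructor
    · intro h
      refine ⟨e.symm w, ?_, e.apply_symm_apply w⟩
      have h2 := SimpleGraph.Iso.map_adj_iff e.symm (v := e v) (w := w)
      simp only [RelIso.symm_apply_apply] at h2
      exact h2.mpr h
    · rintro ⟨x, hx, rfl⟩
      exact e.map_adj_iff.mpr hx
  rw [hset, Set.ncard_image_of_injective _ e.injective]

lemma sec_le_of_iso [Fintype V] [Fintype W] [Nonempty V] (e : G ≃g H) : SEC G ≤ SEC H := by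
  classical
  haveI : Nonempty W := ⟨e (Classical.arbitrary V)⟩
  apply csSup_le'
  rintro k ⟨π, hπ, rfl⟩
  have hcard : Nat.card V = Nat.card W := Nat.card_congr e.toEquiv
  set F : Set V → Set W := Set.image ⇑e with hF
  have hFinj : Function.Injective F := Set.image_injective.mpr e.injective
  have hπ' : IsSecPartition H (π.image F) := by
    constructor
    · constructor
      · intro h0
        rw [Finset.mem_coe, Finset.mem_image] at h0
        obtain ⟨A, hA, hA0⟩ := h0
        rw [Set.image_eq_empty] at hA0
        subst hA0
        exact hπ.1.1 (Finset.mem_coe.mpr hA)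
      · intro w
        obtain ⟨B, ⟨hBπ, hvB⟩, huniq⟩ := hπ.1.2 (e.symm w)
        refine ⟨F B, ⟨Finset.mem_coe.mpr (Finset.mem_image_of_mem F (Finset.mem_coe.mp hBπ)),
          ⟨_, hvB, e.apply_symm_apply w⟩⟩, ?_⟩
        rintro C ⟨hCπ, hwC⟩
        rw [Finset.mem_coe, Finset.mem_image] at hCπ
        obtain ⟨A, hA, rfl⟩ := hCπ
        have hmemA : e.symm w ∈ A := by
          obtain ⟨x, hx, hxw⟩ := hwC
          have : x = e.symm w := by rw [← hxw]; simp
          rwa [← this]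
        rw [huniq A ⟨Finset.mem_coe.mpr hA, hmemA⟩]
    · intro A' hA'
      rw [Finset.mem_image] at hA'
      obtain ⟨A, hA, rfl⟩ := hA'
      rcases hπ.2 A hA with ⟨v, rfl, hdeg, hsec⟩ | ⟨hnsec, B, hB, hBA, hsec⟩
      · left
        refine ⟨e v, by simp [hF], ?_, ?_⟩
        · rw [iso_deg e v, hdeg, hcard]
        · exact iso_secure e hsec
      · right
        refine ⟨fun h => hnsec ((iso_secure_iff e).mp h), F B,
          Finset.mem_image_of_mem F hB, fun h => hBA (hFinj h), ?_⟩
        rw [show F A ∪ F B = F (A ∪ B) from (Set.image_union _ _ _).symm]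
        exact iso_secure e hsec
  apply le_csSup
  · exact ⟨Fintype.card W, by rintro k ⟨π', hπ', rfl⟩; exact partition_card_le hπ'.1⟩
  · exact ⟨π.image F, hπ', Finset.card_image_of_injective _ hFinj⟩

lemma sec_iso [Fintype V] [Fintype W] [Nonempty V] (e : G ≃g H) : SEC G = SEC H := by
  haveI : Nonempty W := ⟨e (Classical.arbitrary V)⟩
  exact le_antisymm (sec_le_of_iso e) (sec_le_of_iso e.symm)

end Helpers

lemma not_sec_of_far {n : ℕ} (S : Set (Fin n)) (w : Fin n) (hw : w ∉ S)
    (h : ∀ u ∈ S, ¬ (pathGraph n).Adj u w) : ¬ IsSecureDominating (pathGraph n) S := by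
  rintro ⟨hdom, -⟩
  obtain ⟨u, hu, hadj⟩ := hdom w hw
  exact h u hu hadj

lemma sec_path1 : SEC (pathGraph 1) = 1 := by
  classical
  obtain ⟨π, hpart, hc, hform⟩ := exists_singleton_partition (V := Fin 1)
  have hcard1 : Fintype.card (Fin 1) = 1 := by simp
  have hsec : IsSecPartition (pathGraph 1) π := by
    refine ⟨hpart, ?_⟩
    intro A hA
    obtain ⟨v, rfl⟩ := (hform A).1 hA
    left
    refine ⟨v, rfl, ?_, ?_, ?_⟩
    · have hns : (pathGraph 1).neighborSet v = ∅ := by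
        ext w
        simp only [mem_neighborSet, pathGraph_adj, Set.mem_empty_iff_false, iff_false]
        omega
      unfold deg
      rw [hns]
      simp
    · intro u hu
      exact absurd (Subsingleton.elim u v) (by simpa using hu)
    · intro u hu
      exact absurd (Subsingleton.elim u v) (by simpa using hu)
  rw [← hcard1]
  exact sec_eq_card hsec hc

lemma sec_path2 : SEC (pathGraph 2) = 2 := by
  classical
  obtain ⟨π, hpart, hc, hform⟩ := exists_singleton_partition (V := Fin 2)
  have hcard2 : Fintype.card (Fin 2) = 2 := by simp
  have hsec : IsSecPartition (pathGraph 2) π := by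
    refine ⟨hpart, ?_⟩
    intro A hA
    obtain ⟨v, rfl⟩ := (hform A).1 hA
    left
    refine ⟨v, rfl, ?_, ?_⟩
    · unfold deg
      fin_cases v
      · show ((pathGraph 2).neighborSet 0).ncard = Nat.card (Fin 2) - 1
        rw [show (pathGraph 2).neighborSet 0 = {1} by
          ext w; fin_cases w <;> simp [mem_neighborSet, pathGraph_adj] <;> decide]
        simp
      · show ((pathGraph 2).neighborSet 1).ncard = Nat.card (Fin 2) - 1
        rw [show (pathGraph 2).neighborSet 1 = {0} by
          ext w; fin_cases w <;> simp [mem_neighborSet, pathGraph_adj] <;> decide]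
        simp
    · fin_cases v <;>
      · refine ⟨?_, ?_⟩ <;>
        · unfold IsDominating
          simp only [Set.mem_singleton_iff, Set.mem_union, Set.mem_diff, pathGraph_adj]
          decide
  rw [← hcard2]
  exact sec_eq_card hsec hc

lemma sec_path3 : SEC (pathGraph 3) = 3 := by
  classical
  obtain ⟨π, hpart, hc, hform⟩ := exists_singleton_partition (V := Fin 3)
  have hcard3 : Fintype.card (Fin 3) = 3 := by simp
  have hmem : ∀ x : Fin 3, ({x} : Set (Fin 3)) ∈ π := fun x => (hform _).2 ⟨x, rfl⟩
  have hsec : IsSecPartition (pathGraph 3) π := by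
    refine ⟨hpart, ?_⟩
    intro A hA
    obtain ⟨v, rfl⟩ := (hform A).1 hA
    right
    refine ⟨?_, {![1,0,1] v}, hmem _, ?_, ?_⟩
    · fin_cases v
      · exact not_sec_of_far _ 2 (by simp) (by
          intro u hu hadj
          rw [Set.mem_singleton_iff] at hu
          subst hu
          rw [pathGraph_adj] at hadj
          revert hadj
          decide)
      · rintro ⟨-, hsec⟩
        obtain ⟨x, hx, -, hdom⟩ := hsec 0 (by simp)
        rw [Set.mem_singleton_iff] at hx
        subst hx
        obtain ⟨y, hy, hyadj⟩ := hdom 2 (by simp)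
        simp only [Set.mem_union, Set.mem_diff, Set.mem_singleton_iff] at hy
        have hy0 : y = 0 := by tauto
        subst hy0
        rw [pathGraph_adj] at hyadj
        revert hyadj
        decide
      · exact not_sec_of_far _ 0 (by simp) (by
          intro u hu hadj
          rw [Set.mem_singleton_iff] at hu
          subst hu
          rw [pathGraph_adj] at hadj
          revert hadj
          decide)
    · simp only [ne_eq, Set.singleton_eq_singleton_iff]
      fin_cases v <;> decide
    · rw [Set.singleton_union]
      fin_cases v <;>
      · refine ⟨?_, ?_⟩ <;>
        · unfold IsDominating
          simp only [Set.mem_insert_iff, Set.mem_singleton_iff, Set.mem_union, Set.mem_diff,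
            pathGraph_adj]
          decide
  rw [← hcard3]
  exact sec_eq_card hsec hc

lemma sec_path4 : SEC (pathGraph 4) = 4 := by
  classical
  obtain ⟨π, hpart, hc, hform⟩ := exists_singleton_partition (V := Fin 4)
  have hcard4 : Fintype.card (Fin 4) = 4 := by simp
  have hmem : ∀ x : Fin 4, ({x} : Set (Fin 4)) ∈ π := fun x => (hform _).2 ⟨x, rfl⟩
  have hsec : IsSecPartition (pathGraph 4) π := by
    refine ⟨hpart, ?_⟩
    intro A hA
    obtain ⟨v, rfl⟩ := (hform A).1 hA
    right
    refine ⟨?_, {![2,3,0,1] v}, hmem _, ?_, ?_⟩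
    · fin_cases v
      · exact not_sec_of_far _ 2 (by simp) (by
          intro u hu hadj
          rw [Set.mem_singleton_iff] at hu
          subst hu
          rw [pathGraph_adj] at hadj
          revert hadj
          decide)
      · exact not_sec_of_far _ 3 (by simp) (by
          intro u hu hadj
          rw [Set.mem_singleton_iff] at hu
          subst hu
          rw [pathGraph_adj] at hadj
          revert hadj
          decide)
      · exact not_sec_of_far _ 0 (by simp) (by
          intro u hu hadj
          rw [Set.mem_singleton_iff] at hu
          subst hu
          rw [pathGraph_adj] at hadj
          revert hadj
          decide)
      · exact not_sec_of_far _ 1 (by simp) (by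
          intro u hu hadj
          rw [Set.mem_singleton_iff] at hu
          subst hu
          rw [pathGraph_adj] at hadj
          revert hadj
          decide)
    · simp only [ne_eq, Set.singleton_eq_singleton_iff]
      fin_cases v <;> decide
    · rw [Set.singleton_union]
      fin_cases v <;>
      · refine ⟨?_, ?_⟩ <;>
        · unfold IsDominating
          simp only [Set.mem_insert_iff, Set.mem_singleton_iff, Set.mem_union, Set.mem_diff,
            pathGraph_adj]
          decide
  rw [← hcard4]
  exact sec_eq_card hsec hc


section Struct

variable {V : Type*} {T : SimpleGraph V}

lemma card_le_two_of_cover [Fintype V] {x0 x1 : V}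
    (h : ∀ w : V, w = x0 ∨ w = x1) : Fintype.card V ≤ 2 := by
  have := card_le_three_of_cover (x0 := x0) (x1 := x1) (x2 := x1)
    (fun w => by rcases h w with h | h; exacts [Or.inl h, Or.inr (Or.inl h)])
  -- not tight; direct:
  classical
  have hsub : (Finset.univ : Finset V) ⊆ {x0, x1} := by
    intro w _; rcases h w with h | h <;> simp [h]
  have h1 := Finset.card_insert_le x0 ({x1} : Finset V)
  have h2 : ({x1} : Finset V).card = 1 := Finset.card_singleton _
  have := Finset.card_le_card hsub
  rw [Finset.card_univ] at this
  omega

lemma cover_of_pair {u v : V} (hsec : IsSecureDominating T {u, v}) :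
    ∀ w : V, w = u ∨ w = v ∨ T.Adj u w ∨ T.Adj v w := by
  intro w
  by_cases h1 : w = u
  · exact Or.inl h1
  by_cases h2 : w = v
  · exact Or.inr (Or.inl h2)
  obtain ⟨x, hx, hadj⟩ := hsec.1 w (by
    simp only [Set.mem_insert_iff, Set.mem_singleton_iff]
    push_neg
    exact ⟨h1, h2⟩)
  simp only [Set.mem_insert_iff, Set.mem_singleton_iff] at hx
  rcases hx with rfl | rfl
  · exact Or.inr (Or.inr (Or.inl hadj))
  · exact Or.inr (Or.inr (Or.inr hadj))

lemma priv_unique (hT : T.IsTree) {u v a b : V} (hsec : IsSecureDominating T {u, v})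
    (hua : T.Adj u a) (hva : ¬ T.Adj v a) (hav : a ≠ v)
    (hub : T.Adj u b) (hvb : ¬ T.Adj v b) (hbv : b ≠ v) : a = b := by
  by_contra hne
  obtain ⟨s, hs, hsadj, hdomD⟩ := hsec.2 a (by
    simp only [Set.mem_insert_iff, Set.mem_singleton_iff]
    push_neg
    exact ⟨hua.ne', hav⟩)
  simp only [Set.mem_insert_iff, Set.mem_singleton_iff] at hs
  rcases hs with rfl | rfl
  · have hbD : b ∉ (({s, v} : Set V) \ {s}) ∪ {a} := by
      intro hmem
      simp only [Set.mem_union, Set.mem_diff, Set.mem_insert_iff, Set.mem_singleton_iff] at hmem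
      rcases hmem with ⟨h1 | h1, h2⟩ | h1
      · exact h2 h1
      · exact hbv h1
      · exact hne h1.symm
    obtain ⟨x, hxD, hxb⟩ := hdomD b hbD
    simp only [Set.mem_union, Set.mem_diff, Set.mem_insert_iff, Set.mem_singleton_iff] at hxD
    rcases hxD with ⟨rfl | rfl, hx2⟩ | rfl
    · exact hx2 rfl
    · exact hvb hxb
    · exact tree_tri hT hua hxb hub
  · exact hva hsadj

lemma common_unique (hT : T.IsTree) {u v c c' : V} (huv : u ≠ v)
    (huc : T.Adj u c) (hvc : T.Adj v c) (huc' : T.Adj u c') (hvc' : T.Adj v c') : c = c' := by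
  by_contra hne
  exact tree_c4 hT huc hvc.symm hvc' huc'.symm huv hne

lemma common_kills (hT : T.IsTree) {u v c : V}
    (hsec : IsSecureDominating T {u, v}) (huc : T.Adj u c) (hvc : T.Adj v c) :
    (∀ a, T.Adj u a → a ≠ v → T.Adj v a) ∨ (∀ b, T.Adj v b → b ≠ u → T.Adj u b) := by
  obtain ⟨s, hs, hsadj, hdomD⟩ := hsec.2 c (by
    simp only [Set.mem_insert_iff, Set.mem_singleton_iff]
    push_neg
    exact ⟨huc.ne', hvc.ne'⟩)
  simp only [Set.mem_insert_iff, Set.mem_singleton_iff] at hs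
  rcases hs with rfl | rfl
  · left
    intro a hua hav
    by_contra hva
    have haD : a ∉ (({s, v} : Set V) \ {s}) ∪ {c} := by
      intro hmem
      simp only [Set.mem_union, Set.mem_diff, Set.mem_insert_iff, Set.mem_singleton_iff] at hmem
      rcases hmem with ⟨h1 | h1, h2⟩ | h1
      · exact h2 h1
      · exact hav h1
      · exact hva (h1 ▸ hvc)
    obtain ⟨x, hxD, hxa⟩ := hdomD a haD
    simp only [Set.mem_union, Set.mem_diff, Set.mem_insert_iff, Set.mem_singleton_iff] at hxD
    rcases hxD with ⟨rfl | rfl, hx2⟩ | rfl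
    · exact hx2 rfl
    · exact hva hxa
    · exact tree_tri hT huc hxa hua
  · right
    intro b hvb hbu
    by_contra hub
    have hbD : b ∉ (({u, s} : Set V) \ {s}) ∪ {c} := by
      intro hmem
      simp only [Set.mem_union, Set.mem_diff, Set.mem_insert_iff, Set.mem_singleton_iff] at hmem
      rcases hmem with ⟨h1 | h1, h2⟩ | h1
      · exact hbu h1
      · exact h2 h1
      · exact hub (h1 ▸ huc)
    obtain ⟨x, hxD, hxb⟩ := hdomD b hbD
    simp only [Set.mem_union, Set.mem_diff, Set.mem_insert_iff, Set.mem_singleton_iff] at hxD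
    rcases hxD with ⟨rfl | rfl, hx2⟩ | rfl
    · exact hub hxb
    · exact hx2 rfl
    · exact tree_tri hT hvc hxb hvb

lemma pair_bound [Fintype V] (hT : T.IsTree) {u v : V} (huv : u ≠ v)
    (hsec : IsSecureDominating T {u, v}) : Fintype.card V ≤ 4 := by
  classical
  have hsec' : IsSecureDominating T {v, u} := by rwa [Set.pair_comm] at hsec
  have cover := cover_of_pair hsec
  by_cases hcom : ∃ c, T.Adj u c ∧ T.Adj v c
  · obtain ⟨c, huc, hvc⟩ := hcom
    rcases common_kills hT hsec huc hvc with hL | hR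
    · have hunbr : ∀ w, T.Adj u w → w ≠ v → w = c := fun w hw hwv =>
        common_unique hT huv hw (hL w hw hwv) huc hvc
      by_cases hb : ∃ b, T.Adj v b ∧ ¬ T.Adj u b ∧ b ≠ u
      · obtain ⟨b, hvb, hub, hbu⟩ := hb
        apply card_le_four_of_cover (x0 := u) (x1 := v) (x2 := c) (x3 := b)
        intro w
        rcases cover w with rfl | rfl | hw | hw
        · exact Or.inl rfl
        · exact Or.inr (Or.inl rfl)
        · by_cases hwv : w = v
          · exact Or.inr (Or.inl hwv)
          · exact Or.inr (Or.inr (Or.inl (hunbr w hw hwv)))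
        · by_cases hwu : w = u
          · exact Or.inl hwu
          by_cases hwu2 : T.Adj u w
          · exact Or.inr (Or.inr (Or.inl (hunbr w hwu2 hw.ne')))
          · exact Or.inr (Or.inr (Or.inr (priv_unique hT hsec' hw hwu2 hwu hvb hub hbu)))
      · push_neg at hb
        refine (card_le_three_of_cover (x0 := u) (x1 := v) (x2 := c) ?_).trans (by omega)
        intro w
        rcases cover w with rfl | rfl | hw | hw
        · exact Or.inl rfl
        · exact Or.inr (Or.inl rfl)
        · by_cases hwv : w = v
          · exact Or.inr (Or.inl hwv)
          · exact Or.inr (Or.inr (hunbr w hw hwv))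
        · by_cases hwu : w = u
          · exact Or.inl hwu
          by_cases hwu2 : T.Adj u w
          · exact Or.inr (Or.inr (hunbr w hwu2 hw.ne'))
          · exact Or.inl (hb w hw hwu2)
    · have hvnbr : ∀ w, T.Adj v w → w ≠ u → w = c := fun w hw hwu =>
        common_unique hT huv.symm hw (hR w hw hwu) hvc huc
      by_cases ha : ∃ a, T.Adj u a ∧ ¬ T.Adj v a ∧ a ≠ v
      · obtain ⟨a, hua, hva, hav⟩ := ha
        apply card_le_four_of_cover (x0 := u) (x1 := v) (x2 := c) (x3 := a)
        intro w
        rcases cover w with rfl | rfl | hw | hw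
        · exact Or.inl rfl
        · exact Or.inr (Or.inl rfl)
        · by_cases hwv : w = v
          · exact Or.inr (Or.inl hwv)
          by_cases hwv2 : T.Adj v w
          · exact Or.inr (Or.inr (Or.inl (hvnbr w hwv2 hw.ne')))
          · exact Or.inr (Or.inr (Or.inr (priv_unique hT hsec hw hwv2 hwv hua hva hav)))
        · by_cases hwu : w = u
          · exact Or.inl hwu
          · exact Or.inr (Or.inr (Or.inl (hvnbr w hw hwu)))
      · push_neg at ha
        refine (card_le_three_of_cover (x0 := u) (x1 := v) (x2 := c) ?_).trans (by omega)
        intro w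
        rcases cover w with rfl | rfl | hw | hw
        · exact Or.inl rfl
        · exact Or.inr (Or.inl rfl)
        · by_cases hwv : w = v
          · exact Or.inr (Or.inl hwv)
          by_cases hwv2 : T.Adj v w
          · exact Or.inr (Or.inr (hvnbr w hwv2 hw.ne'))
          · exact Or.inr (Or.inl (ha w hw hwv2))
        · by_cases hwu : w = u
          · exact Or.inl hwu
          · exact Or.inr (Or.inr (hvnbr w hw hwu))
  · push_neg at hcom
    by_cases ha : ∃ a, T.Adj u a ∧ a ≠ v
    · obtain ⟨a, hua, hav⟩ := ha
      by_cases hb : ∃ b, T.Adj v b ∧ b ≠ u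
      · obtain ⟨b, hvb, hbu⟩ := hb
        apply card_le_four_of_cover (x0 := u) (x1 := v) (x2 := a) (x3 := b)
        intro w
        rcases cover w with rfl | rfl | hw | hw
        · exact Or.inl rfl
        · exact Or.inr (Or.inl rfl)
        · by_cases hwv : w = v
          · exact Or.inr (Or.inl hwv)
          · exact Or.inr (Or.inr (Or.inl
              (priv_unique hT hsec hw (hcom w hw) hwv hua (hcom a hua) hav)))
        · by_cases hwu : w = u
          · exact Or.inl hwu
          · exact Or.inr (Or.inr (Or.inr (priv_unique hT hsec' hw
              (fun h => hcom w h hw) hwu hvb (fun h => hcom b h hvb) hbu)))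
      · push_neg at hb
        refine (card_le_three_of_cover (x0 := u) (x1 := v) (x2 := a) ?_).trans (by omega)
        intro w
        rcases cover w with rfl | rfl | hw | hw
        · exact Or.inl rfl
        · exact Or.inr (Or.inl rfl)
        · by_cases hwv : w = v
          · exact Or.inr (Or.inl hwv)
          · exact Or.inr (Or.inr
              (priv_unique hT hsec hw (hcom w hw) hwv hua (hcom a hua) hav))
        · exact Or.inl (hb w hw)
    · push_neg at ha
      by_cases hb : ∃ b, T.Adj v b ∧ b ≠ u
      · obtain ⟨b, hvb, hbu⟩ := hb
        refine (card_le_three_of_cover (x0 := u) (x1 := v) (x2 := b) ?_).trans (by omega)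
        intro w
        rcases cover w with rfl | rfl | hw | hw
        · exact Or.inl rfl
        · exact Or.inr (Or.inl rfl)
        · exact Or.inr (Or.inl (ha w hw))
        · by_cases hwu : w = u
          · exact Or.inl hwu
          · exact Or.inr (Or.inr (priv_unique hT hsec' hw
              (fun h => hcom w h hw) hwu hvb (fun h => hcom b h hvb) hbu))
      · push_neg at hb
        refine (card_le_two_of_cover (x0 := u) (x1 := v) ?_).trans (by omega)
        intro w
        rcases cover w with rfl | rfl | hw | hw
        · exact Or.inl rfl
        · exact Or.inr rfl
        · exact Or.inr (ha w hw)
        · exact Or.inl (hb w hw)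

lemma bij_of_four {x0 x1 x2 x3 : V} (h01 : x0 ≠ x1) (h02 : x0 ≠ x2) (h03 : x0 ≠ x3)
    (h12 : x1 ≠ x2) (h13 : x1 ≠ x3) (h23 : x2 ≠ x3)
    (hcov : ∀ w : V, w = x0 ∨ w = x1 ∨ w = x2 ∨ w = x3) :
    Function.Bijective ![x0, x1, x2, x3] := by
  constructor
  · intro i j hij
    fin_cases i <;> fin_cases j <;> simp_all
  · intro x
    rcases hcov x with rfl | rfl | rfl | rfl
    exacts [⟨0, rfl⟩, ⟨1, rfl⟩, ⟨2, rfl⟩, ⟨3, rfl⟩]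

lemma struct_common [Fintype V] (hT : T.IsTree) {u v c : V} (huv : u ≠ v)
    (hsec : IsSecureDominating T {u, v}) (huc : T.Adj u c) (hvc : T.Adj v c)
    (hL : ∀ a, T.Adj u a → a ≠ v → T.Adj v a) (h4 : Fintype.card V = 4) :
    ∃ w : Fin 4 → V, Function.Bijective w ∧
      T.Adj (w 0) (w 1) ∧ T.Adj (w 1) (w 2) ∧ T.Adj (w 2) (w 3) ∧
      ¬ T.Adj (w 0) (w 2) ∧ ¬ T.Adj (w 0) (w 3) ∧ ¬ T.Adj (w 1) (w 3) := by
  classical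
  have hsec' : IsSecureDominating T {v, u} := by rwa [Set.pair_comm] at hsec
  have cover := cover_of_pair hsec
  have hunbr : ∀ w, T.Adj u w → w ≠ v → w = c := fun w hw hwv =>
    common_unique hT huv hw (hL w hw hwv) huc hvc
  have hnuv : ¬ T.Adj u v := fun h => tree_tri hT h hvc huc
  have hb : ∃ b, T.Adj v b ∧ ¬ T.Adj u b ∧ b ≠ u := by
    by_contra hb
    push_neg at hb
    have hle : Fintype.card V ≤ 3 := by
      apply card_le_three_of_cover (x0 := u) (x1 := v) (x2 := c)
      intro w
      rcases cover w with rfl | rfl | hw | hw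
      · exact Or.inl rfl
      · exact Or.inr (Or.inl rfl)
      · by_cases hwv : w = v
        · exact Or.inr (Or.inl hwv)
        · exact Or.inr (Or.inr (hunbr w hw hwv))
      · by_cases hwu : w = u
        · exact Or.inl hwu
        by_cases hwu2 : T.Adj u w
        · exact Or.inr (Or.inr (hunbr w hwu2 hw.ne'))
        · exact Or.inl (hb w hw hwu2)
    omega
  obtain ⟨b, hvb, hub, hbu⟩ := hb
  have hcb : ¬ T.Adj c b := fun h => tree_tri hT hvc h hvb
  have hbc : b ≠ c := fun h => hub (h ▸ huc)
  have hcov : ∀ x, x = u ∨ x = c ∨ x = v ∨ x = b := by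
    intro x
    rcases cover x with rfl | rfl | hw | hw
    · exact Or.inl rfl
    · exact Or.inr (Or.inr (Or.inl rfl))
    · by_cases hwv : x = v
      · exact Or.inr (Or.inr (Or.inl hwv))
      · exact Or.inr (Or.inl (hunbr x hw hwv))
    · by_cases hwu : x = u
      · exact Or.inl hwu
      by_cases hwu2 : T.Adj u x
      · exact Or.inr (Or.inl (hunbr x hwu2 hw.ne'))
      · exact Or.inr (Or.inr (Or.inr (priv_unique hT hsec' hw hwu2 hwu hvb hub hbu)))
  exact ⟨![u, c, v, b],
    bij_of_four huc.ne huv (Ne.symm hbu) hvc.ne' (Ne.symm hbc) hvb.ne hcov,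
    huc, hvc.symm, hvb, hnuv, hub, hcb⟩

lemma pair_structure4 [Fintype V] (hT : T.IsTree) {u v : V} (huv : u ≠ v)
    (hsec : IsSecureDominating T {u, v}) (h4 : Fintype.card V = 4) :
    ∃ w : Fin 4 → V, Function.Bijective w ∧
      T.Adj (w 0) (w 1) ∧ T.Adj (w 1) (w 2) ∧ T.Adj (w 2) (w 3) ∧
      ¬ T.Adj (w 0) (w 2) ∧ ¬ T.Adj (w 0) (w 3) ∧ ¬ T.Adj (w 1) (w 3) := by
  classical
  have hsec' : IsSecureDominating T {v, u} := by rwa [Set.pair_comm] at hsec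
  have cover := cover_of_pair hsec
  by_cases hcom : ∃ c, T.Adj u c ∧ T.Adj v c
  · obtain ⟨c, huc, hvc⟩ := hcom
    rcases common_kills hT hsec huc hvc with hL | hR
    · exact struct_common hT huv hsec huc hvc hL h4
    · exact struct_common hT huv.symm hsec' hvc huc hR h4
  · push_neg at hcom
    have ha : ∃ a, T.Adj u a ∧ a ≠ v := by
      by_contra ha
      push_neg at ha
      have hle : Fintype.card V ≤ 3 := by
        by_cases hb : ∃ b, T.Adj v b ∧ b ≠ u
        · obtain ⟨b, hvb, hbu⟩ := hb
          apply card_le_three_of_cover (x0 := u) (x1 := v) (x2 := b)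
          intro w
          rcases cover w with rfl | rfl | hw | hw
          · exact Or.inl rfl
          · exact Or.inr (Or.inl rfl)
          · exact Or.inr (Or.inl (ha w hw))
          · by_cases hwu : w = u
            · exact Or.inl hwu
            · exact Or.inr (Or.inr (priv_unique hT hsec' hw
                (fun h => hcom w h hw) hwu hvb (fun h => hcom b h hvb) hbu))
        · push_neg at hb
          apply card_le_three_of_cover (x0 := u) (x1 := v) (x2 := v)
          intro w
          rcases cover w with rfl | rfl | hw | hw
          · exact Or.inl rfl
          · exact Or.inr (Or.inl rfl)
          · exact Or.inr (Or.inl (ha w hw))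
          · exact Or.inl (hb w hw)
      omega
    obtain ⟨a, hua, hav⟩ := ha
    have hva : ¬ T.Adj v a := hcom a hua
    have hb : ∃ b, T.Adj v b ∧ b ≠ u := by
      by_contra hb
      push_neg at hb
      have hle : Fintype.card V ≤ 3 := by
        apply card_le_three_of_cover (x0 := u) (x1 := v) (x2 := a)
        intro w
        rcases cover w with rfl | rfl | hw | hw
        · exact Or.inl rfl
        · exact Or.inr (Or.inl rfl)
        · by_cases hwv : w = v
          · exact Or.inr (Or.inl hwv)
          · exact Or.inr (Or.inr (priv_unique hT hsec hw (hcom w hw) hwv hua hva hav))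
        · exact Or.inl (hb w hw)
      omega
    obtain ⟨b, hvb, hbu⟩ := hb
    have hub : ¬ T.Adj u b := fun h => hcom b h hvb
    have hcovz : ∀ x, x = u ∨ x = v ∨ x = a ∨ x = b := by
      intro x
      rcases cover x with rfl | rfl | hw | hw
      · exact Or.inl rfl
      · exact Or.inr (Or.inl rfl)
      · by_cases hwv : x = v
        · exact Or.inr (Or.inl hwv)
        · exact Or.inr (Or.inr (Or.inl (priv_unique hT hsec hw (hcom x hw) hwv hua hva hav)))
      · by_cases hwu : x = u
        · exact Or.inl hwu
        · exact Or.inr (Or.inr (Or.inr (priv_unique hT hsec' hw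
            (fun h => hcom x h hw) hwu hvb (fun h => hcom b h hvb) hbu)))
    have hab : a ≠ b := fun h => hva (h ▸ hvb)
    have hnav : ¬ T.Adj a v := fun h => hva h.symm
    by_cases huvadj : T.Adj u v
    · have hnab : ¬ T.Adj a b := fun h =>
        tree_c4 hT hua.symm huvadj hvb h.symm hav (Ne.symm hbu)
      exact ⟨![a, u, v, b],
        bij_of_four hua.ne' hav hab huv (Ne.symm hbu) hvb.ne
          (fun x => by rcases hcovz x with rfl | rfl | rfl | rfl <;> tauto),
        hua.symm, huvadj, hvb, hnav, hnab, hub⟩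
    · have hadjab : T.Adj a b := by
        by_contra hnab
        have hclosed : ∀ x ∈ ({u, a} : Set V), ∀ y, T.Adj x y → y ∈ ({u, a} : Set V) := by
          intro x hx y hxy
          simp only [Set.mem_insert_iff, Set.mem_singleton_iff] at hx ⊢
          rcases hx with rfl | rfl
          · rcases hcovz y with rfl | rfl | rfl | rfl
            · exact absurd hxy (T.loopless.irrefl _)
            · exact absurd hxy huvadj
            · exact Or.inr rfl
            · exact absurd hxy hub
          · rcases hcovz y with rfl | rfl | rfl | rfl
            · exact Or.inl rfl
            · exact absurd hxy hnav
            · exact absurd hxy (T.loopless.irrefl _)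
            · exact absurd hxy hnab
        have hv2 := walk_closed _ hclosed (hT.isConnected.preconnected u v).some (by simp)
        simp only [Set.mem_insert_iff, Set.mem_singleton_iff] at hv2
        rcases hv2 with h | h
        · exact huv h.symm
        · exact hav h.symm
      exact ⟨![u, a, b, v],
        bij_of_four hua.ne (Ne.symm hbu) huv hab hav hvb.ne'
          (fun x => by rcases hcovz x with rfl | rfl | rfl | rfl <;> tauto),
        hua, hadjab, hvb.symm, hub, (fun h => huvadj h), hnav⟩
    
lemma tree2 [Fintype V] (hT : T.IsTree) (h2 : Fintype.card V = 2) :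
    ∃ w : Fin 2 → V, Function.Bijective w ∧ T.Adj (w 0) (w 1) := by
  classical
  obtain ⟨a, b, hab, huniv⟩ := Finset.card_eq_two.mp
    (show (Finset.univ : Finset V).card = 2 by rw [Finset.card_univ, h2])
  have hcov : ∀ x : V, x = a ∨ x = b := by
    intro x
    have hx := huniv ▸ Finset.mem_univ x
    simpa using hx
  have hadj : T.Adj a b := by
    by_contra hnadj
    have hclosed : ∀ x ∈ ({a} : Set V), ∀ y, T.Adj x y → y ∈ ({a} : Set V) := by
      intro x hx y hxy
      rw [Set.mem_singleton_iff] at hx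
      subst hx
      rcases hcov y with rfl | rfl
      · exact absurd hxy (T.loopless.irrefl _)
      · exact absurd hxy hnadj
    have := walk_closed _ hclosed (hT.isConnected.preconnected a b).some rfl
    rw [Set.mem_singleton_iff] at this
    exact hab this.symm
  refine ⟨![a, b], ⟨?_, ?_⟩, hadj⟩
  · intro i j hij
    fin_cases i <;> fin_cases j <;> simp_all
  · intro x
    rcases hcov x with rfl | rfl
    exacts [⟨0, rfl⟩, ⟨1, rfl⟩]

lemma tree3 [Fintype V] (hT : T.IsTree) (h3 : Fintype.card V = 3) :
    ∃ w : Fin 3 → V, Function.Bijective w ∧ T.Adj (w 0) (w 1) ∧ T.Adj (w 1) (w 2) ∧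
      ¬ T.Adj (w 0) (w 2) := by
  classical
  obtain ⟨a, b, c, hab, hac, hbc, huniv⟩ := Finset.card_eq_three.mp
    (show (Finset.univ : Finset V).card = 3 by rw [Finset.card_univ, h3])
  have hcov : ∀ x : V, x = a ∨ x = b ∨ x = c := by
    intro x
    have hx := huniv ▸ Finset.mem_univ x
    simpa using hx
  have bij3 : ∀ x y z : V, x ≠ y → x ≠ z → y ≠ z → (∀ t, t = x ∨ t = y ∨ t = z) →
      Function.Bijective ![x, y, z] := by
    intro x y z hh1 hh2 hh3 hcv
    constructor
    · intro i j hij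
      fin_cases i <;> fin_cases j <;> simp_all
    · intro t
      rcases hcv t with rfl | rfl | rfl
      exacts [⟨0, rfl⟩, ⟨1, rfl⟩, ⟨2, rfl⟩]
  have cut : ∀ x y z : V, (∀ t, t = x ∨ t = y ∨ t = z) → ¬ T.Adj x z → ¬ T.Adj y z →
      x ≠ z → y ≠ z → False := by
    intro x y z hcv hxz hyz hxzne hyzne
    have hclosed : ∀ p ∈ ({x, y} : Set V), ∀ q, T.Adj p q → q ∈ ({x, y} : Set V) := by
      intro p hp q hpq
      simp only [Set.mem_insert_iff, Set.mem_singleton_iff] at hp ⊢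
      rcases hp with rfl | rfl
      · rcases hcv q with rfl | rfl | rfl
        · exact Or.inl rfl
        · exact Or.inr rfl
        · exact absurd hpq hxz
      · rcases hcv q with rfl | rfl | rfl
        · exact Or.inl rfl
        · exact Or.inr rfl
        · exact absurd hpq hyz
    have hz := walk_closed _ hclosed (hT.isConnected.preconnected x z).some (by simp)
    simp only [Set.mem_insert_iff, Set.mem_singleton_iff] at hz
    rcases hz with h | h
    · exact hxzne h.symm
    · exact hyzne h.symm
  by_cases h1 : T.Adj a b <;> by_cases h2 : T.Adj b c <;> by_cases h3' : T.Adj a c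
  · exact absurd h3' (fun h => tree_tri hT h1 h2 h)
  · exact ⟨![a, b, c], bij3 a b c hab hac hbc hcov, h1, h2, h3'⟩
  · exact ⟨![b, a, c], bij3 b a c (Ne.symm hab) hbc hac
      (fun t => by rcases hcov t with rfl | rfl | rfl <;> tauto), h1.symm, h3', h2⟩
  · exact (cut a b c hcov h3' h2 hac hbc).elim
  · exact ⟨![a, c, b], bij3 a c b hac hab (Ne.symm hbc)
      (fun t => by rcases hcov t with rfl | rfl | rfl <;> tauto), h3', h2.symm, h1⟩
  · exact (cut b c a
      (fun t => by rcases hcov t with rfl | rfl | rfl <;> tauto)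
      (fun h => h1 h.symm) (fun h => h3' h.symm) (Ne.symm hab) (Ne.symm hac)).elim
  · exact (cut a c b
      (fun t => by rcases hcov t with rfl | rfl | rfl <;> tauto)
      h1 (fun h => h2 h.symm) hab (Ne.symm hbc)).elim
  · exact (cut a b c hcov h3' h2 hac hbc).elim

lemma iso_of_adjmatch {n : ℕ} (w : Fin n → V) (hb : Function.Bijective w)
    (key : ∀ i j, T.Adj (w i) (w j) ↔ (pathGraph n).Adj i j) :
    Nonempty (T ≃g pathGraph n) := by
  refine ⟨⟨(Equiv.ofBijective w hb).symm, ?_⟩⟩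
  intro a b
  have hw : ∀ x, w ((Equiv.ofBijective w hb).symm x) = x := fun x =>
    (Equiv.ofBijective w hb).apply_symm_apply x
  rw [← key]
  rw [hw, hw]

lemma branch1_impossible [Fintype V] (hT : T.IsTree) (h3 : 3 ≤ Fintype.card V) {v : V}
    (hsec : IsSecureDominating T {v}) : False := by
  classical
  obtain ⟨u1, hu1⟩ := Fintype.exists_ne_of_one_lt_card (by omega) v
  have hex : ∃ u2, u2 ≠ u1 ∧ u2 ≠ v := by
    by_contra h
    push_neg at h
    have := card_le_two_of_cover (x0 := u1) (x1 := v) (fun w => by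
      by_cases hw : w = u1
      · exact Or.inl hw
      · exact Or.inr (h w hw))
    omega
  obtain ⟨u2, h21, h2v⟩ := hex
  obtain ⟨s, hs, hsadj, hdom⟩ := hsec.2 u1 (by simpa using hu1)
  rw [Set.mem_singleton_iff] at hs
  subst hs
  obtain ⟨x, hx, hxadj⟩ := hdom u2 (by
    intro hmem
    simp only [Set.mem_union, Set.mem_diff, Set.mem_singleton_iff] at hmem
    rcases hmem with ⟨h1, h2⟩ | h1
    · exact h2 h1
    · exact h21 h1)
  have hx1 : x = u1 := by
    simp only [Set.mem_union, Set.mem_diff, Set.mem_singleton_iff] at hx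
    tauto
  subst hx1
  obtain ⟨s2, hs2, hs2adj, -⟩ := hsec.2 u2 (by simpa using h2v)
  rw [Set.mem_singleton_iff] at hs2
  subst hs2
  exact tree_tri hT hsadj hxadj hs2adj

end Struct

open SecCoal
theorem stmt12 {V : Type*} [Fintype V] (T : SimpleGraph V) (hT : T.IsTree) :
    SEC T = Fintype.card V ↔
      (Fintype.card V ≤ 4 ∧
        Nonempty (T ≃g SimpleGraph.pathGraph (Fintype.card V))) := by
  classical
  haveI hne : Nonempty V := hT.isConnected.nonempty
  have hpos : 0 < Fintype.card V := Fintype.card_pos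
  constructor
  · intro hSEC
    have hpair : 3 ≤ Fintype.card V → ∃ u v : V, u ≠ v ∧ IsSecureDominating T {u, v} := by
      intro h3
      obtain ⟨π, hπ, hc⟩ := exists_partition_of_sec_eq hSEC
      obtain ⟨A, hA⟩ := Finset.card_pos.mp (show 0 < π.card by omega)
      obtain ⟨v, rfl⟩ := parts_singleton hπ.1 hc hA
      rcases hπ.2 _ hA with ⟨x, hx, hdeg, hsec⟩ | ⟨hnsec, B, hB, hBne, hsec⟩
      · exact absurd hsec (fun h => branch1_impossible hT h3 h)
      · obtain ⟨u, rfl⟩ := parts_singleton hπ.1 hc hB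
        refine ⟨v, u, ?_, ?_⟩
        · intro h
          exact hBne (by rw [h])
        · rwa [Set.singleton_union] at hsec
    have h4 : Fintype.card V ≤ 4 := by
      by_cases h3 : 3 ≤ Fintype.card V
      · obtain ⟨u, v, huv, hsec⟩ := hpair h3
        exact pair_bound hT huv hsec
      · omega
    refine ⟨h4, ?_⟩
    have hcases : Fintype.card V = 1 ∨ Fintype.card V = 2 ∨ Fintype.card V = 3 ∨
        Fintype.card V = 4 := by omega
    rcases hcases with h | h | h | h
    · rw [h]
      haveI : Subsingleton V := Fintype.card_le_one_iff_subsingleton.mp (by omega)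
      refine ⟨⟨Fintype.equivFinOfCardEq h, ?_⟩⟩
      intro x y
      refine iff_of_false ?_ ?_
      · intro hadj
        rw [pathGraph_adj] at hadj
        omega
      · intro hadj
        rw [Subsingleton.elim x y] at hadj
        exact T.loopless.irrefl y hadj
    · rw [h]
      obtain ⟨w, hbij, h01⟩ := tree2 hT h
      apply iso_of_adjmatch w hbij
      intro i j
      fin_cases i <;> fin_cases j
      · exact iff_of_false (T.loopless.irrefl _) (by rw [pathGraph_adj]; decide)
      · exact iff_of_true h01 (by rw [pathGraph_adj]; decide)
      · exact iff_of_true h01.symm (by rw [pathGraph_adj]; decide)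
      · exact iff_of_false (T.loopless.irrefl _) (by rw [pathGraph_adj]; decide)
    · rw [h]
      obtain ⟨w, hbij, h01, h12, n02⟩ := tree3 hT h
      apply iso_of_adjmatch w hbij
      intro i j
      fin_cases i <;> fin_cases j
      · exact iff_of_false (T.loopless.irrefl _) (by rw [pathGraph_adj]; decide)
      · exact iff_of_true h01 (by rw [pathGraph_adj]; decide)
      · exact iff_of_false n02 (by rw [pathGraph_adj]; decide)
      · exact iff_of_true h01.symm (by rw [pathGraph_adj]; decide)
      · exact iff_of_false (T.loopless.irrefl _) (by rw [pathGraph_adj]; decide)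
      · exact iff_of_true h12 (by rw [pathGraph_adj]; decide)
      · exact iff_of_false (fun hadj => n02 hadj.symm) (by rw [pathGraph_adj]; decide)
      · exact iff_of_true h12.symm (by rw [pathGraph_adj]; decide)
      · exact iff_of_false (T.loopless.irrefl _) (by rw [pathGraph_adj]; decide)
    · rw [h]
      obtain ⟨u, v, huv, hsec⟩ := hpair (by omega)
      obtain ⟨w, hbij, h01, h12, h23, n02, n03, n13⟩ := pair_structure4 hT huv hsec h
      apply iso_of_adjmatch w hbij
      intro i j
      fin_cases i <;> fin_cases j
      · exact iff_of_false (T.loopless.irrefl _) (by rw [pathGraph_adj]; decide)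
      · exact iff_of_true h01 (by rw [pathGraph_adj]; decide)
      · exact iff_of_false n02 (by rw [pathGraph_adj]; decide)
      · exact iff_of_false n03 (by rw [pathGraph_adj]; decide)
      · exact iff_of_true h01.symm (by rw [pathGraph_adj]; decide)
      · exact iff_of_false (T.loopless.irrefl _) (by rw [pathGraph_adj]; decide)
      · exact iff_of_true h12 (by rw [pathGraph_adj]; decide)
      · exact iff_of_false n13 (by rw [pathGraph_adj]; decide)
      · exact iff_of_false (fun hadj => n02 hadj.symm) (by rw [pathGraph_adj]; decide)
      · exact iff_of_true h12.symm (by rw [pathGraph_adj]; decide)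
      · exact iff_of_false (T.loopless.irrefl _) (by rw [pathGraph_adj]; decide)
      · exact iff_of_true h23 (by rw [pathGraph_adj]; decide)
      · exact iff_of_false (fun hadj => n03 hadj.symm) (by rw [pathGraph_adj]; decide)
      · exact iff_of_false (fun hadj => n13 hadj.symm) (by rw [pathGraph_adj]; decide)
      · exact iff_of_true h23.symm (by rw [pathGraph_adj]; decide)
      · exact iff_of_false (T.loopless.irrefl _) (by rw [pathGraph_adj]; decide)
  · rintro ⟨h4, ⟨e⟩⟩
    have hiso : SEC T = SEC (pathGraph (Fintype.card V)) := sec_iso e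
    have hcases : Fintype.card V = 1 ∨ Fintype.card V = 2 ∨ Fintype.card V = 3 ∨
        Fintype.card V = 4 := by omega
    rcases hcases with h | h | h | h <;> rw [h] at hiso ⊢ <;> rw [hiso]
    · exact sec_path1
    · exact sec_path2
    · exact sec_path3
    · exact sec_path4
end

section
/- For any tree T of order n ≥ 5 with T not isomorphic to the path P₅, SEC(T) ≤ n − 2. -/
open SecCoal SimpleGraph

open SecCoal SimpleGraph

section Helpers

variable {V : Type*} [Fintype V] {T : SimpleGraph V}

omit [Fintype V] in
lemma path_unique (hT : T.IsTree) {u v : V} {p q : T.Walk u v} (hp : p.IsPath) (hq : q.IsPath) :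
    p = q :=
  (hT.existsUnique_path u v).unique hp hq

omit [Fintype V] in
lemma no_cycle3 (hT : T.IsTree) {x y z : V} (h1 : T.Adj x y) (h2 : T.Adj y z)
    (h3 : T.Adj x z) : False := by
  have hp : (Walk.cons h3 Walk.nil).IsPath := by
    simp [Walk.isPath_def, h3.ne]
  have hq : (Walk.cons h1 (Walk.cons h2 Walk.nil)).IsPath := by
    simp [Walk.isPath_def, h1.ne, h2.ne, h3.ne]
  have := congrArg Walk.length (path_unique hT hp hq)
  simp at this

omit [Fintype V] in
lemma no_cycle4 (hT : T.IsTree) {a b c d : V} (h1 : T.Adj a b) (h2 : T.Adj b c)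
    (h3 : T.Adj c d) (h4 : T.Adj a d) (hac : a ≠ c) (hbd : b ≠ d) : False := by
  have hp : (Walk.cons h4 Walk.nil).IsPath := by
    simp [Walk.isPath_def, h4.ne]
  have hq : (Walk.cons h1 (Walk.cons h2 (Walk.cons h3 Walk.nil))).IsPath := by
    simp [Walk.isPath_def, h1.ne, h2.ne, h3.ne, h4.ne, hac, hbd]
  have := congrArg Walk.length (path_unique hT hp hq)
  simp at this

omit [Fintype V] in
lemma no_cycle5 (hT : T.IsTree) {a b c d e : V} (h1 : T.Adj a b) (h2 : T.Adj b c)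
    (h3 : T.Adj c d) (h4 : T.Adj d e) (h5 : T.Adj a e)
    (hac : a ≠ c) (had : a ≠ d) (hbd : b ≠ d) (hbe : b ≠ e) (hce : c ≠ e) : False := by
  have hp : (Walk.cons h5 Walk.nil).IsPath := by
    simp [Walk.isPath_def, h5.ne]
  have hq : (Walk.cons h1 (Walk.cons h2 (Walk.cons h3 (Walk.cons h4 Walk.nil)))).IsPath := by
    simp [Walk.isPath_def, h1.ne, h2.ne, h3.ne, h4.ne, h5.ne, hac, had, hbd, hbe, hce]
  have := congrArg Walk.length (path_unique hT hp hq)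
  simp at this

omit [Fintype V] in
lemma no_two_paths3 (hT : T.IsTree) {a b x1 x2 y1 y2 : V}
    (e1 : T.Adj a x1) (e2 : T.Adj x1 x2) (e3 : T.Adj x2 b)
    (f1 : T.Adj a y1) (f2 : T.Adj y1 y2) (f3 : T.Adj y2 b)
    (hx : x1 ≠ y1) (hax2 : a ≠ x2) (hx1b : x1 ≠ b) (hay2 : a ≠ y2) (hy1b : y1 ≠ b)
    (hab : a ≠ b) : False := by
  have hp : (Walk.cons e1 (Walk.cons e2 (Walk.cons e3 Walk.nil))).IsPath := by
    simp [Walk.isPath_def, e1.ne, e2.ne, e3.ne, hax2, hx1b, hab]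
  have hq : (Walk.cons f1 (Walk.cons f2 (Walk.cons f3 Walk.nil))).IsPath := by
    simp [Walk.isPath_def, f1.ne, f2.ne, f3.ne, hay2, hy1b, hab]
  have := congrArg Walk.support (path_unique hT hp hq)
  simp at this
  exact hx this.1

lemma iso_P5 (hT : T.IsTree) (hn : 5 ≤ Fintype.card V) {v1 v2 v3 v4 v5 : V}
    (e12 : T.Adj v1 v2) (e23 : T.Adj v2 v3) (e34 : T.Adj v3 v4) (e45 : T.Adj v4 v5)
    (d13 : v1 ≠ v3) (d14 : v1 ≠ v4) (d15 : v1 ≠ v5) (d24 : v2 ≠ v4) (d25 : v2 ≠ v5)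
    (d35 : v3 ≠ v5)
    (hall : ∀ v : V, v = v1 ∨ v = v2 ∨ v = v3 ∨ v = v4 ∨ v = v5) :
    Nonempty (T ≃g SimpleGraph.pathGraph 5) := by
  have n13 : ¬T.Adj v1 v3 := fun h => no_cycle3 hT e12 e23 h
  have n24 : ¬T.Adj v2 v4 := fun h => no_cycle3 hT e23 e34 h
  have n35 : ¬T.Adj v3 v5 := fun h => no_cycle3 hT e34 e45 h
  have n14 : ¬T.Adj v1 v4 := fun h => no_cycle4 hT e12 e23 e34 h d13 d24
  have n25 : ¬T.Adj v2 v5 := fun h => no_cycle4 hT e23 e34 e45 h d24 d35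
  have n15 : ¬T.Adj v1 v5 := fun h => no_cycle5 hT e12 e23 e34 e45 h d13 d14 d24 d25 d35
  have e21 := e12.symm; have e32 := e23.symm; have e43 := e34.symm; have e54 := e45.symm
  have n31 : ¬T.Adj v3 v1 := fun h => n13 h.symm
  have n42 : ¬T.Adj v4 v2 := fun h => n24 h.symm
  have n53 : ¬T.Adj v5 v3 := fun h => n35 h.symm
  have n41 : ¬T.Adj v4 v1 := fun h => n14 h.symm
  have n52 : ¬T.Adj v5 v2 := fun h => n25 h.symm
  have n51 : ¬T.Adj v5 v1 := fun h => n15 h.symm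
  let f : Fin 5 → V := ![v1, v2, v3, v4, v5]
  have hsurj : Function.Surjective f := by
    intro v
    rcases hall v with rfl | rfl | rfl | rfl | rfl
    exacts [⟨0, rfl⟩, ⟨1, rfl⟩, ⟨2, rfl⟩, ⟨3, rfl⟩, ⟨4, rfl⟩]
  have hcard : Fintype.card (Fin 5) = Fintype.card V := by
    have := Fintype.card_le_of_surjective f hsurj
    simp at this ⊢
    omega
  have hbij : Function.Bijective f :=
    (Fintype.bijective_iff_surjective_and_card f).2 ⟨hsurj, hcard⟩
  have key : ∀ i j : Fin 5, T.Adj (f i) (f j) ↔ (SimpleGraph.pathGraph 5).Adj i j := by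
    intro i j
    fin_cases i <;> fin_cases j <;>
      simp [f, SimpleGraph.pathGraph_adj, T.irrefl, *, e21, e32, e43, e54, n13, n24, n35, n14, n25, n15, n31, n42, n53, n41, n52, n51]
  letI iso : SimpleGraph.pathGraph 5 ≃g T := ⟨Equiv.ofBijective f hbij, fun {i j} => key i j⟩
  exact ⟨iso.symm⟩

lemma exists_ne4 (hn : 5 ≤ Fintype.card V) (a b c d : V) :
    ∃ v : V, v ≠ a ∧ v ≠ b ∧ v ≠ c ∧ v ≠ d := by
  classical
  by_contra h
  push_neg at h
  have h' : ∀ v : V, v = a ∨ v = b ∨ v = c ∨ v = d := by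
    intro v
    by_cases h1 : v = a
    · tauto
    by_cases h2 : v = b
    · tauto
    by_cases h3 : v = c
    · tauto
    exact Or.inr (Or.inr (Or.inr (h v h1 h2 h3)))
  have hsub : (Finset.univ : Finset V) ⊆ {a, b, c, d} := by
    intro v _
    rcases h' v with h1 | h1 | h1 | h1 <;> simp [h1]
  have hle := Finset.card_le_card hsub
  have h4 : ({a, b, c, d} : Finset V).card ≤ 4 := by
    apply le_trans (Finset.card_insert_le _ _)
    have h1 := Finset.card_insert_le b ({c, d} : Finset V)
    have h2 := Finset.card_insert_le c ({d} : Finset V)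
    simp at h1 h2 ⊢
    omega
  rw [Finset.card_univ] at hle
  omega

lemma no_sec_singleton (hT : T.IsTree) (hn : 5 ≤ Fintype.card V) (x : V) :
    ¬ IsSecureDominating T {x} := by
  rintro ⟨hdom, hsec⟩
  obtain ⟨u, hux, -, -, -⟩ := exists_ne4 hn x x x x
  obtain ⟨s, hs, hadj, hdom'⟩ := hsec u (by simp [hux])
  simp only [Set.mem_singleton_iff] at hs
  subst hs
  obtain ⟨w, hwx, hwu, -, -⟩ := exists_ne4 hn s u u u
  obtain ⟨t, ht, ht2⟩ := hdom' w (by simp [hwu, hwx])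
  simp only [Set.mem_union, Set.mem_diff, Set.mem_singleton_iff] at ht
  have htu : t = u := by tauto
  subst htu
  obtain ⟨t', ht', ht'2⟩ := hdom w (by simp [hwx])
  simp only [Set.mem_singleton_iff] at ht'
  subst ht'
  exact no_cycle3 hT hadj ht2 ht'2

lemma sec_pair_classA (hT : T.IsTree) {v w : V} (hsd : IsSecureDominating T {v, w})
    (x1 x2 : V) (h12 : x1 ≠ x2) (hx1nw : x1 ≠ w) (hx2nw : x2 ≠ w)
    (hx1v : T.Adj v x1) (hx1w : ¬T.Adj w x1)
    (hx2v : T.Adj v x2) (hx2w : ¬T.Adj w x2) : False := by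
  obtain ⟨hdom, hsec⟩ := hsd
  obtain ⟨s, hs, hadj, hdom'⟩ := hsec x1 (by
    simp only [Set.mem_insert_iff, Set.mem_singleton_iff]
    push_neg
    exact ⟨hx1v.ne', hx1nw⟩)
  simp only [Set.mem_insert_iff, Set.mem_singleton_iff] at hs
  rcases hs with rfl | rfl
  · obtain ⟨t, ht, ht2⟩ := hdom' x2 (by
      simp only [Set.mem_union, Set.mem_diff, Set.mem_insert_iff, Set.mem_singleton_iff]
      tauto)
    simp only [Set.mem_union, Set.mem_diff, Set.mem_insert_iff, Set.mem_singleton_iff] at ht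
    rcases ht with ⟨h | h, hne⟩ | h
    · exact hne h
    · subst h; exact hx2w ht2
    · subst h; exact no_cycle3 hT hx1v ht2 hx2v
  · exact hx1w hadj

lemma no_sec_pair (hT : T.IsTree) (hn : 5 ≤ Fintype.card V) {v w : V} (hvw : v ≠ w) :
    ¬ IsSecureDominating T {v, w} := by
  intro hsd
  have hsd' : IsSecureDominating T {w, v} := by rwa [Set.pair_comm]
  obtain ⟨hdom, hsec⟩ := hsd
  have kA : ∀ x1 x2 : V, x1 ≠ x2 → x1 ≠ w → x2 ≠ w → T.Adj v x1 → ¬T.Adj w x1 →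
      T.Adj v x2 → ¬T.Adj w x2 → False := fun x1 x2 a b c d e f g =>
    sec_pair_classA hT ⟨hdom, hsec⟩ x1 x2 a b c d e f g
  have kB : ∀ x1 x2 : V, x1 ≠ x2 → x1 ≠ v → x2 ≠ v → T.Adj w x1 → ¬T.Adj v x1 →
      T.Adj w x2 → ¬T.Adj v x2 → False := fun x1 x2 a b c d e f g =>
    sec_pair_classA hT hsd' x1 x2 a b c d e f g
  have kC : ∀ c1 c2 : V, c1 ≠ c2 → T.Adj v c1 → T.Adj w c1 → T.Adj v c2 → T.Adj w c2 →
      False := fun c1 c2 h12 h1 h2 h3 h4 =>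
    no_cycle4 hT h1 h2.symm h4 h3 hvw h12
  have final : ∀ x y c : V, x ≠ v → x ≠ w → y ≠ v → y ≠ w → c ≠ v → c ≠ w → x ≠ c → y ≠ c →
      T.Adj v x → ¬T.Adj w x → T.Adj w y → ¬T.Adj v y → T.Adj v c → T.Adj w c → False := by
    intro x y c hxv hxw hyv hyw hcv hcw hxc hyc hvx hwx hwy hvy hvc hwc
    obtain ⟨s, hs, hadj, hdom'⟩ := hsec c (by
      simp only [Set.mem_insert_iff, Set.mem_singleton_iff]
      push_neg
      exact ⟨hcv, hcw⟩)
    simp only [Set.mem_insert_iff, Set.mem_singleton_iff] at hs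
    rcases hs with rfl | rfl
    · obtain ⟨t, ht, ht2⟩ := hdom' x (by
        simp only [Set.mem_union, Set.mem_diff, Set.mem_insert_iff, Set.mem_singleton_iff]
        tauto)
      simp only [Set.mem_union, Set.mem_diff, Set.mem_insert_iff, Set.mem_singleton_iff] at ht
      rcases ht with ⟨h | h, hne⟩ | h
      · exact hne h
      · subst h; exact hwx ht2
      · subst h; exact no_cycle3 hT hvx ht2.symm hvc
    · obtain ⟨t, ht, ht2⟩ := hdom' y (by
        simp only [Set.mem_union, Set.mem_diff, Set.mem_insert_iff, Set.mem_singleton_iff]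
        tauto)
      simp only [Set.mem_union, Set.mem_diff, Set.mem_insert_iff, Set.mem_singleton_iff] at ht
      rcases ht with ⟨h | h, hne⟩ | h
      · subst h; exact hvy ht2
      · exact hne h
      · subst h; exact no_cycle3 hT hwy ht2.symm hwc
  have hcl : ∀ z : V, z ≠ v → z ≠ w →
      (T.Adj v z ∧ ¬T.Adj w z) ∨ (T.Adj w z ∧ ¬T.Adj v z) ∨ (T.Adj v z ∧ T.Adj w z) := by
    intro z h1 h2
    obtain ⟨t, ht, ht2⟩ := hdom z (by
      simp only [Set.mem_insert_iff, Set.mem_singleton_iff]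
      push_neg
      exact ⟨h1, h2⟩)
    simp only [Set.mem_insert_iff, Set.mem_singleton_iff] at ht
    by_cases hv : T.Adj v z <;> by_cases hw : T.Adj w z <;> rcases ht with rfl | rfl <;> tauto
  obtain ⟨z1, hz1v, hz1w, -, -⟩ := exists_ne4 hn v w v w
  obtain ⟨z2, hz2v, hz2w, h21, -⟩ := exists_ne4 hn v w z1 z1
  obtain ⟨z3, hz3v, hz3w, h31, h32⟩ := exists_ne4 hn v w z1 z2
  rcases hcl z1 hz1v hz1w with h1 | h1 | h1 <;>
    rcases hcl z2 hz2v hz2w with h2 | h2 | h2 <;>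
      rcases hcl z3 hz3v hz3w with h3 | h3 | h3
  · exact kA z1 z2 h21.symm hz1w hz2w h1.1 h1.2 h2.1 h2.2
  · exact kA z1 z2 h21.symm hz1w hz2w h1.1 h1.2 h2.1 h2.2
  · exact kA z1 z2 h21.symm hz1w hz2w h1.1 h1.2 h2.1 h2.2
  · exact kA z1 z3 h31.symm hz1w hz3w h1.1 h1.2 h3.1 h3.2
  · exact kB z2 z3 h32.symm hz2v hz3v h2.1 h2.2 h3.1 h3.2
  · exact final z1 z2 z3 hz1v hz1w hz2v hz2w hz3v hz3w h31.symm h32.symm h1.1 h1.2 h2.1 h2.2 h3.1 h3.2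
  · exact kA z1 z3 h31.symm hz1w hz3w h1.1 h1.2 h3.1 h3.2
  · exact final z1 z3 z2 hz1v hz1w hz3v hz3w hz2v hz2w h21.symm h32 h1.1 h1.2 h3.1 h3.2 h2.1 h2.2
  · exact kC z2 z3 h32.symm h2.1 h2.2 h3.1 h3.2
  · exact kA z2 z3 h32.symm hz2w hz3w h2.1 h2.2 h3.1 h3.2
  · exact kB z1 z3 h31.symm hz1v hz3v h1.1 h1.2 h3.1 h3.2
  · exact final z2 z1 z3 hz2v hz2w hz1v hz1w hz3v hz3w h32.symm h31.symm h2.1 h2.2 h1.1 h1.2 h3.1 h3.2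
  · exact kB z1 z2 h21.symm hz1v hz2v h1.1 h1.2 h2.1 h2.2
  · exact kB z1 z2 h21.symm hz1v hz2v h1.1 h1.2 h2.1 h2.2
  · exact kB z1 z2 h21.symm hz1v hz2v h1.1 h1.2 h2.1 h2.2
  · exact final z3 z1 z2 hz3v hz3w hz1v hz1w hz2v hz2w h32 h21.symm h3.1 h3.2 h1.1 h1.2 h2.1 h2.2
  · exact kB z1 z3 h31.symm hz1v hz3v h1.1 h1.2 h3.1 h3.2
  · exact kC z2 z3 h32.symm h2.1 h2.2 h3.1 h3.2
  · exact kA z2 z3 h32.symm hz2w hz3w h2.1 h2.2 h3.1 h3.2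
  · exact final z2 z3 z1 hz2v hz2w hz3v hz3w hz1v hz1w h21 h31 h2.1 h2.2 h3.1 h3.2 h1.1 h1.2
  · exact kC z1 z3 h31.symm h1.1 h1.2 h3.1 h3.2
  · exact final z3 z2 z1 hz3v hz3w hz2v hz2w hz1v hz1w h31 h21 h3.1 h3.2 h2.1 h2.2 h1.1 h1.2
  · exact kB z2 z3 h32.symm hz2v hz3v h2.1 h2.2 h3.1 h3.2
  · exact kC z1 z3 h31.symm h1.1 h1.2 h3.1 h3.2
  · exact kC z1 z2 h21.symm h1.1 h1.2 h2.1 h2.2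
  · exact kC z1 z2 h21.symm h1.1 h1.2 h2.1 h2.2
  · exact kC z1 z2 h21.symm h1.1 h1.2 h2.1 h2.2

end Helpers

section Main

set_option linter.unusedSectionVars false

variable {V : Type*} [Fintype V] {T : SimpleGraph V}

lemma two_leaves (hT : T.IsTree) (hn : 5 ≤ Fintype.card V) {a b : V}
    (Hsec : ∀ v : V, v ≠ a → v ≠ b → IsSecureDominating T {v, a, b}) (hab : a ≠ b)
    {l1 l2 : V} (h12 : l1 ≠ l2)
    (hl1 : ∀ z, T.Adj l1 z → z = a) (hl1a : T.Adj l1 a)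
    (hl2 : ∀ z, T.Adj l2 z → z = a) (hl2a : T.Adj l2 a)
    (h1b : l1 ≠ b) (h2b : l2 ≠ b) : False := by
  obtain ⟨v, hva, hvb, hv1, hv2⟩ := exists_ne4 hn a b l1 l2
  obtain ⟨hdom, hsec⟩ := Hsec v hva hvb
  obtain ⟨s, hs, hadj, hdom'⟩ := hsec l1 (by
    simp only [Set.mem_insert_iff, Set.mem_singleton_iff]
    push_neg
    exact ⟨hv1.symm, hl1a.ne, h1b⟩)
  simp only [Set.mem_insert_iff, Set.mem_singleton_iff] at hs
  rcases hs with rfl | rfl | rfl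
  · exact hva (hl1 s hadj.symm)
  · obtain ⟨t, ht, ht2⟩ := hdom' l2 (by
      simp only [Set.mem_union, Set.mem_diff, Set.mem_insert_iff, Set.mem_singleton_iff]
      intro hmem
      rcases hmem with ⟨h | h | h, -⟩ | h
      · exact hv2 h.symm
      · exact hl2a.ne h
      · exact h2b h
      · exact h12 h.symm)
    simp only [Set.mem_union, Set.mem_diff, Set.mem_insert_iff, Set.mem_singleton_iff] at ht
    rcases ht with ⟨h | h | h, hne⟩ | h
    · subst h; exact hva (hl2 t ht2.symm)
    · exact hne h
    · subst h; exact hab.symm (hl2 t ht2.symm)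
    · subst h; exact hl2a.ne (hl1 l2 ht2)
  · exact hab.symm (hl1 s hadj.symm)

lemma leaf_leaf_kill (hT : T.IsTree) (hn : 5 ≤ Fintype.card V) {a b : V}
    (Hsec : ∀ v : V, v ≠ a → v ≠ b → IsSecureDominating T {v, a, b}) (hab : a ≠ b)
    {x1 y1 w : V}
    (hx1 : ∀ z, T.Adj x1 z → z = a) (hx1a : T.Adj x1 a) (hx1b : x1 ≠ b)
    (hy1 : ∀ z, T.Adj y1 z → z = b) (hy1b : T.Adj y1 b) (hy1a : y1 ≠ a)
    (hwb : T.Adj w b) (hnaw : ¬T.Adj a w) (hwa : w ≠ a) (hwy1 : w ≠ y1) : False := by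
  have hwx1 : w ≠ x1 := by
    intro h
    rw [h] at hwb
    exact hab (hx1 b hwb).symm
  have hx1y1 : y1 ≠ x1 := by
    intro h
    rw [h] at hy1
    exact hab (hy1 a hx1a)
  obtain ⟨hdom, hsec⟩ := Hsec x1 hx1a.ne hx1b
  obtain ⟨s, hs, hadj, hdom'⟩ := hsec w (by
    simp only [Set.mem_insert_iff, Set.mem_singleton_iff]
    push_neg
    exact ⟨hwx1, hwa, hwb.ne⟩)
  simp only [Set.mem_insert_iff, Set.mem_singleton_iff] at hs
  rcases hs with rfl | rfl | rfl
  · exact hwa (hx1 w hadj)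
  · exact hnaw hadj
  · obtain ⟨t, ht, ht2⟩ := hdom' y1 (by
      simp only [Set.mem_union, Set.mem_diff, Set.mem_insert_iff, Set.mem_singleton_iff]
      intro hmem
      rcases hmem with ⟨h | h | h, hne⟩ | h
      · exact hx1y1 h
      · exact hy1a h
      · exact hne h
      · exact hwy1 h.symm)
    simp only [Set.mem_union, Set.mem_diff, Set.mem_insert_iff, Set.mem_singleton_iff] at ht
    rcases ht with ⟨h | h | h, hne⟩ | h
    · rw [h] at ht2
      exact hy1a (hx1 y1 ht2)
    · rw [h] at ht2
      exact hab (hy1 a ht2.symm)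
    · exact hne h
    · rw [h] at ht2
      exact hwb.ne (hy1 w ht2.symm)

lemma beta_leaf (hT : T.IsTree) {a b : V} (hab : a ≠ b)
    (hclassify : ∀ z : V, z ≠ a → z ≠ b → T.Adj a z ∨ T.Adj b z)
    (hnc : ∀ p q : V, p ≠ b → q ≠ a → T.Adj a p → ¬T.Adj b p → T.Adj b q → ¬T.Adj a q →
      ¬T.Adj p q) :
    ∀ x : V, x ≠ a → x ≠ b → T.Adj a x → ¬T.Adj b x → ∀ z, T.Adj x z → z = a := by
  intro x hxa hxb hax hnbx z hadj
  by_contra hza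
  have hzb : z ≠ b := by
    intro h
    rw [h] at hadj
    exact hnbx hadj.symm
  by_cases haz : T.Adj a z
  · exact no_cycle3 hT hax hadj haz
  · have hbz : T.Adj b z := (hclassify z (Ne.intro hza) hzb).resolve_left haz
    exact hnc x z hxb (Ne.intro hza) hax hnbx hbz haz hadj

lemma alpha_leaf (hT : T.IsTree) {a b x0 y0 : V} (hab : a ≠ b)
    (hclassify : ∀ z : V, z ≠ a → z ≠ b → T.Adj a z ∨ T.Adj b z)
    (hax0 : T.Adj a x0) (hnbx0 : ¬T.Adj b x0) (hx0b : x0 ≠ b)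
    (hby0 : T.Adj b y0) (hnay0 : ¬T.Adj a y0) (hy0a : y0 ≠ a)
    (hxy0 : T.Adj x0 y0) :
    ∀ x : V, x ≠ x0 → x ≠ b → T.Adj a x → ¬T.Adj b x → ∀ z, T.Adj x z → z = a := by
  intro x hxx0 hxb hax hnbx z hadj
  by_contra hza
  have hza' : z ≠ a := Ne.intro hza
  have hzb : z ≠ b := by
    intro h
    rw [h] at hadj
    exact hnbx hadj.symm
  by_cases hzx0 : z = x0
  · rw [hzx0] at hadj
    exact no_cycle3 hT hax hadj hax0
  by_cases hzy0 : z = y0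
  · rw [hzy0] at hadj
    exact no_cycle4 hT hax hadj hxy0.symm hax0 hy0a.symm hxx0
  by_cases haz : T.Adj a z
  · exact no_cycle3 hT hax hadj haz
  · have hbz : T.Adj b z := (hclassify z hza' hzb).resolve_left haz
    exact no_two_paths3 hT hax hadj hbz.symm hax0 hxy0 hby0.symm hxx0 hza'.symm hxb
      hy0a.symm hx0b hab

lemma alpha_case (hT : T.IsTree) (hn : 5 ≤ Fintype.card V) {a b x0 y0 x1 : V} (hab : a ≠ b)
    (Hsec : ∀ v : V, v ≠ a → v ≠ b → IsSecureDominating T {v, a, b})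
    (hclassify : ∀ z : V, z ≠ a → z ≠ b → T.Adj a z ∨ T.Adj b z)
    (hax0 : T.Adj a x0) (hnbx0 : ¬T.Adj b x0) (hx0b : x0 ≠ b)
    (hby0 : T.Adj b y0) (hnay0 : ¬T.Adj a y0) (hy0a : y0 ≠ a)
    (hxy0 : T.Adj x0 y0)
    (hx1x0 : x1 ≠ x0) (hx1b : x1 ≠ b) (hax1 : T.Adj a x1) (hnbx1 : ¬T.Adj b x1) :
    Nonempty (T ≃g SimpleGraph.pathGraph 5) := by
  have leafA := alpha_leaf hT hab hclassify hax0 hnbx0 hx0b hby0 hnay0 hy0a hxy0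
  have hx1leaf := leafA x1 hx1x0 hx1b hax1 hnbx1
  have noC : ∀ c : V, T.Adj a c → T.Adj b c → False := by
    intro c h1 h2
    have hbe : x0 ≠ c := fun h => hnbx0 (by rw [h]; exact h2)
    have hce : y0 ≠ c := fun h => hnay0 (by rw [h]; exact h1)
    exact no_cycle5 hT hax0 hxy0 hby0.symm h2 h1 hy0a.symm hab hx0b hbe hce
  by_cases hB1 : ∃ y1 : V, y1 ≠ y0 ∧ y1 ≠ a ∧ T.Adj b y1 ∧ ¬T.Adj a y1
  · obtain ⟨y1, hy1y0, hy1a, hby1, hnay1⟩ := hB1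
    have hclassify' : ∀ z : V, z ≠ b → z ≠ a → T.Adj b z ∨ T.Adj a z := fun z h1 h2 =>
      (hclassify z h2 h1).symm
    have leafB := alpha_leaf hT hab.symm hclassify' hby0 hnay0 hy0a hax0 hnbx0 hx0b
      hxy0.symm y1 hy1y0 hy1a hby1 hnay1
    exact (leaf_leaf_kill hT hn Hsec hab hx1leaf hax1.symm hx1b leafB hby1.symm hy1a
      hby0.symm hnay0 hy0a hy1y0.symm).elim
  · push_neg at hB1
    have hall : ∀ v : V, v = x1 ∨ v = a ∨ v = x0 ∨ v = y0 ∨ v = b := by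
      intro v
      by_cases h1 : v = x1
      · tauto
      by_cases h2 : v = a
      · tauto
      by_cases h3 : v = x0
      · tauto
      by_cases h4 : v = y0
      · tauto
      by_cases h5 : v = b
      · tauto
      exfalso
      rcases hclassify v h2 h5 with h | h
      · by_cases hbv : T.Adj b v
        · exact noC v h hbv
        · exact two_leaves hT hn Hsec hab h1 (leafA v h3 h5 h hbv) h.symm hx1leaf
            hax1.symm h5 hx1b
      · by_cases hav : T.Adj a v
        · exact noC v hav h
        · exact hav (hB1 v h4 h2 h)
    exact iso_P5 hT hn hax1.symm hax0 hxy0 hby0.symm hx1x0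
      (fun h => hnay0 (by rw [← h]; exact hax1)) hx1b hy0a.symm hab hx0b hall

set_option maxHeartbeats 2000000 in
lemma main_iso (hT : T.IsTree) (hn : 5 ≤ Fintype.card V) {a b : V} (hab : a ≠ b)
    (Hsec : ∀ v : V, v ≠ a → v ≠ b → IsSecureDominating T {v, a, b}) :
    Nonempty (T ≃g SimpleGraph.pathGraph 5) := by
  classical
  have Hsec' : ∀ v : V, v ≠ b → v ≠ a → IsSecureDominating T {v, b, a} := by
    intro v h1 h2
    have hst : ({v, b, a} : Set V) = {v, a, b} := by
      ext z; simp only [Set.mem_insert_iff, Set.mem_singleton_iff]; tauto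
    rw [hst]
    exact Hsec v h2 h1
  by_cases hU : ∃ u : V, u ≠ a ∧ u ≠ b ∧ ¬T.Adj a u ∧ ¬T.Adj b u
  · obtain ⟨u, hua, hub, hnau, hnbu⟩ := hU
    have hfull : ∀ z w : V, z ≠ a → z ≠ b → ¬T.Adj a z → ¬T.Adj b z → w ≠ a → w ≠ b →
        z ≠ w → T.Adj z w := by
      intro z w hza hzb h1 h2 hwa hwb hzw
      obtain ⟨hdom, -⟩ := Hsec w hwa hwb
      obtain ⟨t, ht, ht2⟩ := hdom z (by
        simp only [Set.mem_insert_iff, Set.mem_singleton_iff]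
        push_neg
        exact ⟨hzw, hza, hzb⟩)
      simp only [Set.mem_insert_iff, Set.mem_singleton_iff] at ht
      rcases ht with rfl | rfl | rfl
      · exact ht2.symm
      · exact absurd ht2 h1
      · exact absurd ht2 h2
    obtain ⟨x, hxa, hxb, hxu, -⟩ := exists_ne4 hn a b u u
    obtain ⟨y, hya, hyb, hyu, hyx⟩ := exists_ne4 hn a b u x
    have hux : T.Adj u x := hfull u x hua hub hnau hnbu hxa hxb (fun h => hxu h.symm)
    have huy : T.Adj u y := hfull u y hua hub hnau hnbu hya hyb (fun h => hyu h.symm)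
    have claim1 : ∀ z : V, z ≠ a → z ≠ b → z ≠ u → T.Adj a z ∨ T.Adj b z := by
      intro z hza hzb hzu
      by_contra h
      push_neg at h
      by_cases hzx : z = x
      · have hzy : T.Adj z y := hfull z y hza hzb h.1 h.2 hya hyb
          (by rw [hzx]; exact fun hh => hyx hh.symm)
        have huz : T.Adj u z := by rw [hzx]; exact hux
        exact no_cycle3 hT huz hzy huy
      · have hzx' : T.Adj z x := hfull z x hza hzb h.1 h.2 hxa hxb hzx
        have huz : T.Adj u z := hfull u z hua hub hnau hnbu hza hzb (fun hh => hzu hh.symm)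
        exact no_cycle3 hT huz hzx' hux
    have claim2a : ∀ z1 z2 : V, z1 ≠ z2 → z1 ≠ a → z1 ≠ b → z1 ≠ u → z2 ≠ a → z2 ≠ b →
        z2 ≠ u → T.Adj a z1 → T.Adj a z2 → False := by
      intro z1 z2 h12 h1a h1b h1u h2a h2b h2u ha1 ha2
      have g1 : T.Adj u z1 := hfull u z1 hua hub hnau hnbu h1a h1b (fun h => h1u h.symm)
      have g2 : T.Adj u z2 := hfull u z2 hua hub hnau hnbu h2a h2b (fun h => h2u h.symm)
      exact no_cycle4 hT g1 ha1.symm ha2 g2 hua h12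
    have claim2b : ∀ z1 z2 : V, z1 ≠ z2 → z1 ≠ a → z1 ≠ b → z1 ≠ u → z2 ≠ a → z2 ≠ b →
        z2 ≠ u → T.Adj b z1 → T.Adj b z2 → False := by
      intro z1 z2 h12 h1a h1b h1u h2a h2b h2u hb1 hb2
      have g1 : T.Adj u z1 := hfull u z1 hua hub hnau hnbu h1a h1b (fun h => h1u h.symm)
      have g2 : T.Adj u z2 := hfull u z2 hua hub hnau hnbu h2a h2b (fun h => h2u h.symm)
      exact no_cycle4 hT g1 hb1.symm hb2 g2 hub h12
    rcases claim1 x hxa hxb hxu with hax | hbx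
    · rcases claim1 y hya hyb hyu with hay | hby
      · exact (claim2a x y hyx.symm hxa hxb hxu hya hyb hyu hax hay).elim
      · have hall : ∀ v : V, v = a ∨ v = x ∨ v = u ∨ v = y ∨ v = b := by
          intro v
          by_cases h1 : v = a
          · tauto
          by_cases h2 : v = x
          · tauto
          by_cases h3 : v = u
          · tauto
          by_cases h4 : v = y
          · tauto
          by_cases h5 : v = b
          · tauto
          exfalso
          rcases claim1 v h1 h5 h3 with h | h
          · exact claim2a v x h2 h1 h5 h3 hxa hxb hxu h hax
          · exact claim2b v y h4 h1 h5 h3 hya hyb hyu h hby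
        exact iso_P5 hT hn hax hux.symm huy hby.symm hua.symm hya.symm hab hyx.symm hxb
          hub hall
    · rcases claim1 y hya hyb hyu with hay | hby
      · have hall : ∀ v : V, v = a ∨ v = y ∨ v = u ∨ v = x ∨ v = b := by
          intro v
          by_cases h1 : v = a
          · tauto
          by_cases h2 : v = y
          · tauto
          by_cases h3 : v = u
          · tauto
          by_cases h4 : v = x
          · tauto
          by_cases h5 : v = b
          · tauto
          exfalso
          rcases claim1 v h1 h5 h3 with h | h
          · exact claim2a v y h2 h1 h5 h3 hya hyb hyu h hay
          · exact claim2b v x h4 h1 h5 h3 hxa hxb hxu h hbx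
        exact iso_P5 hT hn hay huy.symm hux hbx.symm hua.symm hxa.symm hab hyx hyb
          hub hall
      · exact (claim2b x y hyx.symm hxa hxb hxu hya hyb hyu hbx hby).elim
  · push_neg at hU
    have hclassify : ∀ z : V, z ≠ a → z ≠ b → T.Adj a z ∨ T.Adj b z := by
      intro z h1 h2
      by_cases h : T.Adj a z
      · exact Or.inl h
      · exact Or.inr (hU z h1 h2 h)
    have hclassify' : ∀ z : V, z ≠ b → z ≠ a → T.Adj b z ∨ T.Adj a z := fun z h1 h2 =>
      (hclassify z h2 h1).symm
    by_cases hcross : ∃ p q : V, p ≠ b ∧ q ≠ a ∧ T.Adj a p ∧ ¬T.Adj b p ∧ T.Adj b q ∧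
        ¬T.Adj a q ∧ T.Adj p q
    · obtain ⟨x0, y0, hx0b, hy0a, hax0, hnbx0, hby0, hnay0, hxy0⟩ := hcross
      have noC : ∀ c : V, T.Adj a c → T.Adj b c → False := by
        intro c h1 h2
        have hbe : x0 ≠ c := fun h => hnbx0 (by rw [h]; exact h2)
        have hce : y0 ≠ c := fun h => hnay0 (by rw [h]; exact h1)
        exact no_cycle5 hT hax0 hxy0 hby0.symm h2 h1 hy0a.symm hab hx0b hbe hce
      by_cases hA1 : ∃ x1 : V, x1 ≠ x0 ∧ x1 ≠ b ∧ T.Adj a x1 ∧ ¬T.Adj b x1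
      · obtain ⟨x1, h1, h2, h3, h4⟩ := hA1
        exact alpha_case hT hn hab Hsec hclassify hax0 hnbx0 hx0b hby0 hnay0 hy0a hxy0
          h1 h2 h3 h4
      · by_cases hB1 : ∃ y1 : V, y1 ≠ y0 ∧ y1 ≠ a ∧ T.Adj b y1 ∧ ¬T.Adj a y1
        · obtain ⟨y1, h1, h2, h3, h4⟩ := hB1
          exact alpha_case hT hn hab.symm Hsec' hclassify' hby0 hnay0 hy0a hax0 hnbx0
            hx0b hxy0.symm h1 h2 h3 h4
        · push_neg at hA1 hB1
          have hz : ∀ z : V, z ≠ a → z ≠ b → z = x0 ∨ z = y0 := by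
            intro z h1 h2
            rcases hclassify z h1 h2 with h | h
            · by_cases hb : T.Adj b z
              · exact (noC z h hb).elim
              · by_cases hx : z = x0
                · exact Or.inl hx
                · exact absurd (hA1 z hx h2 h) hb
            · by_cases ha : T.Adj a z
              · exact (noC z ha h).elim
              · by_cases hy : z = y0
                · exact Or.inr hy
                · exact absurd (hB1 z hy h1 h) ha
          obtain ⟨z1, hz1a, hz1b, -, -⟩ := exists_ne4 hn a b a b
          obtain ⟨z2, hz2a, hz2b, h21, -⟩ := exists_ne4 hn a b z1 z1
          obtain ⟨z3, hz3a, hz3b, h31, h32⟩ := exists_ne4 hn a b z1 z2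
          exfalso
          have e1 := hz z1 hz1a hz1b
          have e2 := hz z2 hz2a hz2b
          have e3 := hz z3 hz3a hz3b
          rcases e1 with e1 | e1 <;> rcases e2 with e2 | e2 <;> rcases e3 with e3 | e3 <;>
            simp_all
    · push_neg at hcross
      have hnc : ∀ p q : V, p ≠ b → q ≠ a → T.Adj a p → ¬T.Adj b p → T.Adj b q →
          ¬T.Adj a q → ¬T.Adj p q := hcross
      have hnc' : ∀ p q : V, p ≠ a → q ≠ b → T.Adj b p → ¬T.Adj a p → T.Adj a q →
          ¬T.Adj b q → ¬T.Adj p q := by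
        intro p q h1 h2 h3 h4 h5 h6 h
        exact hnc q p h2 h1 h5 h6 h3 h4 h.symm
      have leafA := beta_leaf hT hab hclassify hnc
      have leafB := beta_leaf hT hab.symm hclassify' hnc'
      have kA : ∀ p q : V, p ≠ q → p ≠ a → p ≠ b → q ≠ a → q ≠ b → T.Adj a p →
          ¬T.Adj b p → T.Adj a q → ¬T.Adj b q → False := by
        intro p q h hpa hpb hqa hqb h1 h2 h3 h4
        exact two_leaves hT hn Hsec hab h (leafA p hpa hpb h1 h2) h1.symm
          (leafA q hqa hqb h3 h4) h3.symm hpb hqb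
      have kB : ∀ p q : V, p ≠ q → p ≠ a → p ≠ b → q ≠ a → q ≠ b → T.Adj b p →
          ¬T.Adj a p → T.Adj b q → ¬T.Adj a q → False := by
        intro p q h hpa hpb hqa hqb h1 h2 h3 h4
        exact two_leaves hT hn Hsec' hab.symm h (leafB p hpb hpa h1 h2) h1.symm
          (leafB q hqb hqa h3 h4) h3.symm hpa hqa
      have kC : ∀ p q : V, p ≠ q → T.Adj a p → T.Adj b p → T.Adj a q → T.Adj b q →
          False := by
        intro p q h h1 h2 h3 h4
        exact no_cycle4 hT h1 h2.symm h4 h3 hab h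
      have hcl : ∀ z : V, z ≠ a → z ≠ b →
          (T.Adj a z ∧ ¬T.Adj b z) ∨ (T.Adj b z ∧ ¬T.Adj a z) ∨ (T.Adj a z ∧ T.Adj b z) := by
        intro z h1 h2
        rcases hclassify z h1 h2 with h | h <;> by_cases hb : T.Adj b z <;>
          by_cases ha : T.Adj a z <;> tauto
      have final : ∀ x y c : V, x ≠ a → x ≠ b → y ≠ a → y ≠ b → c ≠ a → c ≠ b →
          T.Adj a x → ¬T.Adj b x → T.Adj b y → ¬T.Adj a y → T.Adj a c → T.Adj b c →
          Nonempty (T ≃g SimpleGraph.pathGraph 5) := by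
        intro x y c hxa hxb hya hyb hca hcb hax hnbx hby hnay hac hbc
        have hxy : x ≠ y := fun h => hnay (by rw [← h]; exact hax)
        have hxc : x ≠ c := fun h => hnbx (by rw [h]; exact hbc)
        have hyc : y ≠ c := fun h => hnay (by rw [h]; exact hac)
        have hall : ∀ v : V, v = x ∨ v = a ∨ v = c ∨ v = b ∨ v = y := by
          intro v
          by_cases h1 : v = x
          · tauto
          by_cases h2 : v = a
          · tauto
          by_cases h3 : v = c
          · tauto
          by_cases h4 : v = b
          · tauto
          by_cases h5 : v = y
          · tauto
          exfalso
          rcases hcl v h2 h4 with h | h | h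
          · exact kA v x h1 h2 h4 hxa hxb h.1 h.2 hax hnbx
          · exact kB v y h5 h2 h4 hya hyb h.1 h.2 hby hnay
          · exact kC v c h3 h.1 h.2 hac hbc
        exact iso_P5 hT hn hax.symm hac hbc.symm hby hxc hxb hxy hab hya.symm hyc.symm
          hall
      obtain ⟨z1, hz1a, hz1b, -, -⟩ := exists_ne4 hn a b a b
      obtain ⟨z2, hz2a, hz2b, h21, -⟩ := exists_ne4 hn a b z1 z1
      obtain ⟨z3, hz3a, hz3b, h31, h32⟩ := exists_ne4 hn a b z1 z2
      rcases hcl z1 hz1a hz1b with h1 | h1 | h1 <;>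
        rcases hcl z2 hz2a hz2b with h2 | h2 | h2 <;>
          rcases hcl z3 hz3a hz3b with h3 | h3 | h3
      · exact (kA z1 z2 h21.symm hz1a hz1b hz2a hz2b h1.1 h1.2 h2.1 h2.2).elim
      · exact (kA z1 z2 h21.symm hz1a hz1b hz2a hz2b h1.1 h1.2 h2.1 h2.2).elim
      · exact (kA z1 z2 h21.symm hz1a hz1b hz2a hz2b h1.1 h1.2 h2.1 h2.2).elim
      · exact (kA z1 z3 h31.symm hz1a hz1b hz3a hz3b h1.1 h1.2 h3.1 h3.2).elim
      · exact (kB z2 z3 h32.symm hz2a hz2b hz3a hz3b h2.1 h2.2 h3.1 h3.2).elim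
      · exact final z1 z2 z3 hz1a hz1b hz2a hz2b hz3a hz3b h1.1 h1.2 h2.1 h2.2 h3.1 h3.2
      · exact (kA z1 z3 h31.symm hz1a hz1b hz3a hz3b h1.1 h1.2 h3.1 h3.2).elim
      · exact final z1 z3 z2 hz1a hz1b hz3a hz3b hz2a hz2b h1.1 h1.2 h3.1 h3.2 h2.1 h2.2
      · exact (kC z2 z3 h32.symm h2.1 h2.2 h3.1 h3.2).elim
      · exact (kA z2 z3 h32.symm hz2a hz2b hz3a hz3b h2.1 h2.2 h3.1 h3.2).elim
      · exact (kB z1 z3 h31.symm hz1a hz1b hz3a hz3b h1.1 h1.2 h3.1 h3.2).elim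
      · exact final z2 z1 z3 hz2a hz2b hz1a hz1b hz3a hz3b h2.1 h2.2 h1.1 h1.2 h3.1 h3.2
      · exact (kB z1 z2 h21.symm hz1a hz1b hz2a hz2b h1.1 h1.2 h2.1 h2.2).elim
      · exact (kB z1 z2 h21.symm hz1a hz1b hz2a hz2b h1.1 h1.2 h2.1 h2.2).elim
      · exact (kB z1 z2 h21.symm hz1a hz1b hz2a hz2b h1.1 h1.2 h2.1 h2.2).elim
      · exact final z3 z1 z2 hz3a hz3b hz1a hz1b hz2a hz2b h3.1 h3.2 h1.1 h1.2 h2.1 h2.2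
      · exact (kB z1 z3 h31.symm hz1a hz1b hz3a hz3b h1.1 h1.2 h3.1 h3.2).elim
      · exact (kC z2 z3 h32.symm h2.1 h2.2 h3.1 h3.2).elim
      · exact (kA z2 z3 h32.symm hz2a hz2b hz3a hz3b h2.1 h2.2 h3.1 h3.2).elim
      · exact final z2 z3 z1 hz2a hz2b hz3a hz3b hz1a hz1b h2.1 h2.2 h3.1 h3.2 h1.1 h1.2
      · exact (kC z1 z3 h31.symm h1.1 h1.2 h3.1 h3.2).elim
      · exact final z3 z2 z1 hz3a hz3b hz2a hz2b hz1a hz1b h3.1 h3.2 h2.1 h2.2 h1.1 h1.2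
      · exact (kB z2 z3 h32.symm hz2a hz2b hz3a hz3b h2.1 h2.2 h3.1 h3.2).elim
      · exact (kC z1 z3 h31.symm h1.1 h1.2 h3.1 h3.2).elim
      · exact (kC z1 z2 h21.symm h1.1 h1.2 h2.1 h2.2).elim
      · exact (kC z1 z2 h21.symm h1.1 h1.2 h2.1 h2.2).elim
      · exact (kC z1 z2 h21.symm h1.1 h1.2 h2.1 h2.2).elim

end Main


set_option maxHeartbeats 1000000 in
theorem stmt13 {V : Type*} [Fintype V] (T : SimpleGraph V) (hT : T.IsTree)
    (hn : 5 ≤ Fintype.card V) (hP : IsEmpty (T ≃g SimpleGraph.pathGraph 5)) :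
    SEC T ≤ Fintype.card V - 2 := by
  classical
  apply csSup_le'
  rintro k ⟨π, ⟨hpart, hcond⟩, rfl⟩
  by_contra hk
  push_neg at hk
  have hdisj : ∀ A ∈ π, ∀ B ∈ π, A ≠ B → Disjoint A.toFinset B.toFinset := by
    intro A hA B hB hAB
    rw [Finset.disjoint_left]
    intro v hvA hvB
    rw [Set.mem_toFinset] at hvA hvB
    have hd := hpart.pairwiseDisjoint (Finset.mem_coe.mpr hA) (Finset.mem_coe.mpr hB) hAB
    exact (Set.disjoint_left.mp hd hvA) hvB
  have hcover : π.biUnion (fun A => A.toFinset) = Finset.univ := by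
    ext v
    simp only [Finset.mem_biUnion, Finset.mem_univ, iff_true, Set.mem_toFinset]
    obtain ⟨B, ⟨hB, hvB⟩, -⟩ := hpart.2 v
    exact ⟨B, Finset.mem_coe.mp hB, hvB⟩
  have hsum : ∑ A ∈ π, A.toFinset.card = Fintype.card V := by
    rw [← Finset.card_biUnion hdisj, hcover, Finset.card_univ]
  have hpos : ∀ A ∈ π, 1 ≤ A.toFinset.card := by
    intro A hA
    exact Finset.card_pos.mpr (Set.toFinset_nonempty.mpr
      (Setoid.nonempty_of_mem_partition hpart (Finset.mem_coe.mpr hA)))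
  have hm_le : π.card ≤ Fintype.card V := by
    calc π.card = ∑ _A ∈ π, 1 := by simp
    _ ≤ ∑ A ∈ π, A.toFinset.card := Finset.sum_le_sum hpos
    _ = _ := hsum
  have hm_ge : Fintype.card V - 1 ≤ π.card := by omega
  have hkey : ∀ A ∈ π, ∀ B ∈ π, A ≠ B →
      A.toFinset.card + B.toFinset.card + (π.card - 2) ≤ Fintype.card V := by
    intro A hA B hB hAB
    have hBmem : B ∈ π.erase A := Finset.mem_erase.mpr ⟨fun h => hAB h.symm, hB⟩
    have h1 : ∑ C ∈ π, C.toFinset.card =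
        A.toFinset.card + ∑ C ∈ π.erase A, C.toFinset.card :=
      (Finset.add_sum_erase π _ hA).symm
    have h2 : ∑ C ∈ π.erase A, C.toFinset.card =
        B.toFinset.card + ∑ C ∈ (π.erase A).erase B, C.toFinset.card :=
      (Finset.add_sum_erase _ _ hBmem).symm
    have h3 : ((π.erase A).erase B).card ≤ ∑ C ∈ (π.erase A).erase B, C.toFinset.card := by
      calc ((π.erase A).erase B).card = ∑ _C ∈ (π.erase A).erase B, 1 := by simp
      _ ≤ _ := Finset.sum_le_sum
        (fun C hC => hpos C (Finset.mem_of_mem_erase (Finset.mem_of_mem_erase hC)))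
    have h4 : ((π.erase A).erase B).card = π.card - 2 := by
      rw [Finset.card_erase_of_mem hBmem, Finset.card_erase_of_mem hA]
      omega
    have h5 : 2 ≤ π.card := by omega
    omega
  have fact1 : ∀ A ∈ π, A.toFinset.card ≤ 2 := by
    intro A hA
    by_contra h3
    push_neg at h3
    obtain ⟨B, hB, hBA⟩ := Finset.exists_mem_ne (s := π) (by omega) A
    have hk2 := hkey A hA B hB (Ne.symm hBA)
    have := hpos B hB
    omega
  have fact2 : ∀ A ∈ π, ∀ B ∈ π, A ≠ B → 2 ≤ A.toFinset.card → 2 ≤ B.toFinset.card →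
      False := by
    intro A hA B hB hAB h2A h2B
    have := hkey A hA B hB hAB
    omega
  have hpartof : ∀ v : V, ∃ A ∈ π, v ∈ A := by
    intro v
    obtain ⟨B, ⟨hB, hvB⟩, -⟩ := hpart.2 v
    exact ⟨B, Finset.mem_coe.mp hB, hvB⟩
  have hsingle : ∀ A ∈ π, A.toFinset.card = 1 → ∃ w, A = {w} := by
    intro A hA h1
    obtain ⟨w, hw⟩ := Finset.card_eq_one.mp h1
    exact ⟨w, by rw [← Set.coe_toFinset A, hw]; simp⟩
  by_cases hP2 : ∃ P ∈ π, P.toFinset.card = 2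
  · obtain ⟨P, hPπ, hP2'⟩ := hP2
    obtain ⟨a, b, hab, hPab⟩ := Finset.card_eq_two.mp hP2'
    have hPset : P = ({a, b} : Set V) := by
      rw [← Set.coe_toFinset P, hPab]; simp
    have Hsec : ∀ v : V, v ≠ a → v ≠ b → IsSecureDominating T {v, a, b} := by
      intro v hva hvb
      obtain ⟨Bv, hBv, hvBv⟩ := hpartof v
      have hBvP : Bv ≠ P := by
        intro h
        rw [h, hPset] at hvBv
        simp only [Set.mem_insert_iff, Set.mem_singleton_iff] at hvBv
        tauto
      have hBv1 : Bv.toFinset.card = 1 := by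
        have hle := fact1 Bv hBv
        have hge := hpos Bv hBv
        by_contra h
        exact fact2 Bv hBv P hPπ hBvP (by omega) (by omega)
      obtain ⟨w, hw⟩ := hsingle Bv hBv hBv1
      rw [hw] at hvBv
      simp only [Set.mem_singleton_iff] at hvBv
      have hBveq : Bv = ({v} : Set V) := by rw [hw, ← hvBv]
      rcases hcond Bv hBv with ⟨v', hv', -, hsd⟩ | ⟨-, B', hB', hB'ne, hsd⟩
      · exact (no_sec_singleton hT hn v' (hv' ▸ hsd)).elim
      · by_cases hB'P : B' = P
        · rw [hB'P, hPset, hBveq, Set.singleton_union] at hsd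
          exact hsd
        · have hB'1 : B'.toFinset.card = 1 := by
            have hle := fact1 B' hB'
            have hge := hpos B' hB'
            by_contra h
            exact fact2 B' hB' P hPπ hB'P (by omega) (by omega)
          obtain ⟨w', hw'⟩ := hsingle B' hB' hB'1
          have hwv' : w' ≠ v := by
            intro h
            rw [h] at hw'
            exact hB'ne (hw'.trans hBveq.symm)
          rw [hBveq, hw', Set.singleton_union] at hsd
          exact ((no_sec_pair hT hn (fun h => hwv' h.symm)) hsd).elim
    obtain ⟨iso⟩ := main_iso hT hn hab Hsec
    exact hP.false iso
  · push_neg at hP2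
    have hV : Nonempty V := Fintype.card_pos_iff.mp (by omega)
    obtain ⟨v⟩ := hV
    obtain ⟨Bv, hBv, hvBv⟩ := hpartof v
    have hBv1 : Bv.toFinset.card = 1 := by
      have h1 := fact1 Bv hBv
      have h2 := hpos Bv hBv
      have h3 := hP2 Bv hBv
      omega
    obtain ⟨w, hw⟩ := hsingle Bv hBv hBv1
    rw [hw] at hvBv
    simp only [Set.mem_singleton_iff] at hvBv
    have hBveq : Bv = ({v} : Set V) := by rw [hw, ← hvBv]
    rcases hcond Bv hBv with ⟨v', hv', -, hsd⟩ | ⟨-, B', hB', hB'ne, hsd⟩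
    · exact (no_sec_singleton hT hn v' (hv' ▸ hsd)).elim
    · have hB'1 : B'.toFinset.card = 1 := by
        have h1 := fact1 B' hB'
        have h2 := hpos B' hB'
        have h3 := hP2 B' hB'
        omega
      obtain ⟨w', hw'⟩ := hsingle B' hB' hB'1
      have hwv' : w' ≠ v := by
        intro h
        rw [h] at hw'
        exact hB'ne (hw'.trans hBveq.symm)
      rw [hBveq, hw', Set.singleton_union] at hsd
      exact ((no_sec_pair hT hn (fun h => hwv' h.symm)) hsd).elim
end
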